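/- arXiv:1301.2171 — 3 statements merged into one kernel-verified Lean document; each statement's English description precedes it below -/
import Mathlib

section
/- Let Ω be a countably infinite set and let u, v, f ∈ Ω^Ω. If k(u) = k(f) = ∞, c(v) = ∞, and d(v) = 0, then f belongs to the subsemigroup of Ω^Ω generated by S_{1,2,3,4,5} ∪ {u, v}. -/
/-!
Setting: `Ω` is a countably infinite set, `Function.End Ω = Ω → Ω` is the full
transformation semigroup (a subset is closed under composition in one order iff
it is closed in the other, so the lattice of subsemigroups is unaffected by the
left-to-right convention of the paper).
-/

open Cardinal

/-- A transversal of `f`: a set on which `f` is injective and whose image is all of `Ωf`. -/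
def IsTransversal {Ω : Type*} (f : Ω → Ω) (T : Set Ω) : Prop :=
  Set.InjOn f T ∧ f '' T = Set.range f

/-- The defect `d(f) = |Ω \ Ωf|`. -/
noncomputable def defect {Ω : Type*} (f : Ω → Ω) : Cardinal :=
  #((Set.range f)ᶜ : Set Ω)

/-- The collapse `c(f) = |Ω \ Σ|` for a transversal `Σ` of `f` (the value is
independent of the choice of transversal, so the infimum is the common value). -/
noncomputable def collapse {Ω : Type*} (f : Ω → Ω) : Cardinal :=
  ⨅ T : {T : Set Ω // IsTransversal f T}, #(T.1ᶜ : Set Ω)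

/-- The infinite contraction index `k(f) = |{α : αf⁻¹ infinite}|`. -/
noncomputable def contract {Ω : Type*} (f : Ω → Ω) : Cardinal :=
  #({α : Ω | (f ⁻¹' {α}).Infinite} : Set Ω)

def S1 {Ω : Type*} : Set (Function.End Ω) := {f | collapse f = 0 ∨ 0 < defect f}
def S2 {Ω : Type*} : Set (Function.End Ω) := {f | 0 < collapse f ∨ defect f = 0}
def S3 {Ω : Type*} : Set (Function.End Ω) := {f | collapse f < ℵ₀ ∨ ℵ₀ ≤ defect f}
def S4 {Ω : Type*} : Set (Function.End Ω) := {f | ℵ₀ ≤ collapse f ∨ defect f < ℵ₀}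
def S5 {Ω : Type*} : Set (Function.End Ω) := {f | contract f < ℵ₀}

/-- `Sym(Ω)`, the bijections of `Ω`. -/
def SymOmega {Ω : Type*} : Set (Function.End Ω) := {f | Function.Bijective f}

/-- `U = {f : d(f) = ∞ or 0 < c(f) < ∞} ∪ Sym(Ω)`. -/
def SetU {Ω : Type*} : Set (Function.End Ω) :=
  {f | ℵ₀ ≤ defect f ∨ (0 < collapse f ∧ collapse f < ℵ₀)} ∪ SymOmega

/-- `V = {f : c(f) = ∞ or 0 < d(f) < ∞} ∪ Sym(Ω)`. -/
def SetV {Ω : Type*} : Set (Function.End Ω) :=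
  {f | ℵ₀ ≤ collapse f ∨ (0 < defect f ∧ defect f < ℵ₀)} ∪ SymOmega

/-- `S_{1,2,3,4,5}`. -/
def S12345 {Ω : Type*} : Set (Function.End Ω) := S1 ∩ S2 ∩ S3 ∩ S4 ∩ S5

/-- The family `S_1, …, S_5` indexed by `Fin 5`. -/
def SS {Ω : Type*} : Fin 5 → Set (Function.End Ω) := ![S1, S2, S3, S4, S5]


section Helpers

variable {Ω : Type*}

theorem exists_isTransversal (g : Ω → Ω) : ∃ T : Set Ω, IsTransversal g T := by
  classical
  refine ⟨Set.range (fun b : Set.range g => b.2.choose), ?_, ?_⟩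
  · rintro x ⟨b, rfl⟩ y ⟨c, rfl⟩ h
    rw [b.2.choose_spec, c.2.choose_spec] at h
    rw [show b = c from Subtype.ext h]
  · apply Set.Subset.antisymm
    · rintro w ⟨x, ⟨b, rfl⟩, rfl⟩
      rw [b.2.choose_spec]; exact b.2
    · rintro w hw
      exact ⟨(⟨w, hw⟩ : Set.range g).2.choose, ⟨⟨w, hw⟩, rfl⟩,
        (⟨w, hw⟩ : Set.range g).2.choose_spec⟩

theorem collapse_le_of {g : Ω → Ω} {T : Set Ω} (hT : IsTransversal g T) :
    collapse g ≤ #(Tᶜ : Set Ω) :=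
  ciInf_le' _ (⟨T, hT⟩ : {T : Set Ω // IsTransversal g T})

theorem aleph0_le_collapse_of_pairs {g : Ω → Ω} (x y : ℕ → Ω)
    (hxy : ∀ k, x k ≠ y k) (hg : ∀ k, g (x k) = g (y k))
    (hsep : ∀ k j, (x k = x j ∨ x k = y j ∨ y k = x j ∨ y k = y j) → k = j) :
    ℵ₀ ≤ collapse g := by
  classical
  obtain ⟨T0, hT0⟩ := exists_isTransversal g
  haveI : Nonempty {T : Set Ω // IsTransversal g T} := ⟨⟨T0, hT0⟩⟩
  apply le_ciInf
  rintro ⟨T, hTinj, hTim⟩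
  set c : ℕ → Ω := fun k => if x k ∈ T then y k else x k with hc
  have hcmem : ∀ k, c k ∈ Tᶜ := by
    intro k
    simp only [hc]
    split_ifs with h
    · intro hy
      exact hxy k (hTinj h hy (hg k))
    · exact h
  have hcinj : Function.Injective c := by
    intro k j hkj
    apply hsep k j
    simp only [hc] at hkj
    split_ifs at hkj <;> tauto
  exact Cardinal.infinite_iff.mp (Set.infinite_coe_iff.mpr
    (Set.infinite_of_injective_forall_mem hcinj hcmem))

theorem aleph0_le_collapse_of_fiber {g : Ω → Ω} {W : Set Ω} {z : Ω}
    (hW : W.Infinite) (hz : ∀ w ∈ W, g w = z) : ℵ₀ ≤ collapse g := by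
  obtain ⟨T0, hT0⟩ := exists_isTransversal g
  haveI : Nonempty {T : Set Ω // IsTransversal g T} := ⟨⟨T0, hT0⟩⟩
  apply le_ciInf
  rintro ⟨T, hTinj, hTim⟩
  have hsub : (W ∩ T).Subsingleton := by
    rintro w1 ⟨hw1, ht1⟩ w2 ⟨hw2, ht2⟩
    exact hTinj ht1 ht2 (by rw [hz w1 hw1, hz w2 hw2])
  have h1 : (W \ (W ∩ T)).Infinite := hW.diff hsub.finite
  have h2 : W \ (W ∩ T) ⊆ Tᶜ := by
    rintro w ⟨hw, hnt⟩ ht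
    exact hnt ⟨hw, ht⟩
  exact Cardinal.infinite_iff.mp (Set.infinite_coe_iff.mpr (h1.mono h2))

end Helpers

theorem stmt13 (Ω : Type) [Countable Ω] [Infinite Ω] (u v f : Function.End Ω)
    (hku : ℵ₀ ≤ contract u) (hkf : ℵ₀ ≤ contract f)
    (hcv : ℵ₀ ≤ collapse v) (hdv : defect v = 0) :
    f ∈ Subsemigroup.closure (S12345 ∪ {u, v}) := by
  classical
  -- v is surjective; fix a section s of v
  have hsurj : Function.Surjective v := by
    intro w
    by_contra hw
    exact (Cardinal.mk_eq_zero_iff.mp hdv).false ⟨w, hw⟩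
  set s : Ω → Ω := Function.surjInv hsurj with hsdef
  have hvs : ∀ w, v (s w) = w := fun w => Function.surjInv_eq hsurj w
  have hsinj : Function.Injective s := fun w1 w2 h => by rw [← hvs w1, ← hvs w2, h]
  have hTs : IsTransversal v (Set.range s) := by
    constructor
    · rintro x ⟨w1, rfl⟩ y ⟨w2, rfl⟩ h
      rw [hvs, hvs] at h; rw [h]
    · have hcomp : v ∘ s = id := funext hvs
      have hvuniv : Set.range v = Set.univ := Set.range_eq_univ.mpr hsurj
      exact Set.Subset.antisymm (Set.image_subset_range _ _) (fun q _ => ⟨s q, ⟨q, rfl⟩, hvs q⟩)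
  have hscompl : ℵ₀ ≤ #((Set.range s)ᶜ : Set Ω) := le_trans hcv (collapse_le_of hTs)
  -- infinitely many infinite fibers of u
  have hKu : {q : Ω | (u ⁻¹' {q}).Infinite}.Infinite :=
    Set.infinite_coe_iff.mp (Cardinal.infinite_iff.mpr hku)
  set αf : ℕ → Ω := fun n => (Set.Infinite.natEmbedding _ hKu n).1 with hαdef
  have hαinj : Function.Injective αf := fun n m h =>
    (Set.Infinite.natEmbedding _ hKu).injective (Subtype.ext h)
  have hAinf : ∀ n, (u ⁻¹' {αf n}).Infinite := fun n => (Set.Infinite.natEmbedding _ hKu n).2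
  set eA : ℕ → ℕ → Ω := fun n j => (Set.Infinite.natEmbedding _ (hAinf n) j).1 with heAdef
  have heAu : ∀ n j, u (eA n j) = αf n := fun n j => (Set.Infinite.natEmbedding _ (hAinf n) j).2
  have heAinj : ∀ n, Function.Injective (eA n) := fun n j1 j2 h =>
    (Set.Infinite.natEmbedding _ (hAinf n)).injective (Subtype.ext h)
  -- infinitely many infinite fibers of f
  have hKf : {q : Ω | (f ⁻¹' {q}).Infinite}.Infinite :=
    Set.infinite_coe_iff.mp (Cardinal.infinite_iff.mpr hkf)
  set γf : ℕ → Ω := fun k => (Set.Infinite.natEmbedding _ hKf k).1 with hγdef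
  have hγinj : Function.Injective γf := fun n m h =>
    (Set.Infinite.natEmbedding _ hKf).injective (Subtype.ext h)
  have hBinf : ∀ k, (f ⁻¹' {γf k}).Infinite := fun k => (Set.Infinite.natEmbedding _ hKf k).2
  set xv : ℕ → Ω := fun k => (Set.Infinite.natEmbedding _ (hBinf k) 0).1 with hxvdef
  set yv : ℕ → Ω := fun k => (Set.Infinite.natEmbedding _ (hBinf k) 1).1 with hyvdef
  have hfx : ∀ k, f (xv k) = γf k := fun k => (Set.Infinite.natEmbedding _ (hBinf k) 0).2
  have hfy : ∀ k, f (yv k) = γf k := fun k => (Set.Infinite.natEmbedding _ (hBinf k) 1).2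
  have hxyne : ∀ k, xv k ≠ yv k := by
    intro k h
    have := (Set.Infinite.natEmbedding _ (hBinf k)).injective (Subtype.ext h)
    omega
  have hsep : ∀ k j, (xv k = xv j ∨ xv k = yv j ∨ yv k = xv j ∨ yv k = yv j) → k = j := by
    intro k j h
    apply hγinj
    rcases h with h | h | h | h
    · rw [← hfx k, ← hfx j, h]
    · rw [← hfx k, ← hfy j, h]
    · rw [← hfy k, ← hfx j, h]
    · rw [← hfy k, ← hfy j, h]
  have hyvinj : Function.Injective yv := fun k j h =>
    hsep k j (Or.inr (Or.inr (Or.inr h)))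
  have hxvinj : Function.Injective xv := fun k j h => hsep k j (Or.inl h)
  have hxny : ∀ k j, xv k ≠ yv j := by
    intro k j h
    have hkj : k = j := hsep k j (Or.inr (Or.inl h))
    subst hkj
    exact hxyne k h
  -- enumeration of the range of f
  have hRf : (Set.range f).Infinite :=
    Set.infinite_of_injective_forall_mem hγinj (fun k => ⟨xv k, hfx k⟩)
  haveI := hRf.to_subtype
  obtain ⟨e⟩ : Nonempty (↥(Set.range f) ≃ ℕ) := nonempty_equiv_of_countable
  obtain ⟨E⟩ : Nonempty (Ω ≃ ℕ) := nonempty_equiv_of_countable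
  set idx : Ω → ℕ := fun w => e ⟨f w, Set.mem_range_self w⟩ with hidxdef
  set F : ℕ → Ω := fun k => (e.symm k).1 with hFdef
  have hFidx : ∀ w, F (idx w) = f w := by
    intro w
    simp only [hFdef, hidxdef, Equiv.symm_apply_apply]
  have hFinj : Function.Injective F := fun a b h =>
    e.symm.injective (Subtype.ext h)
  have hidxf : ∀ w1 w2, f w1 = f w2 → idx w1 = idx w2 := by
    intro w1 w2 h
    simp only [hidxdef]
    congr 1
    exact Subtype.ext h
  -- the pair-collapsing retraction r
  set r : Ω → Ω := fun w => if h : ∃ k, yv k = w then xv h.choose else w with hrdef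
  have hrx : ∀ k, r (xv k) = xv k := by
    intro k
    have hno : ¬∃ j, yv j = xv k := by
      rintro ⟨j, hj⟩
      exact hxny k j hj.symm
    simp only [hrdef, dif_neg hno]
  have hry : ∀ k, r (yv k) = xv k := by
    intro k
    have hex : ∃ j, yv j = yv k := ⟨k, rfl⟩
    simp only [hrdef, dif_pos hex]
    exact congrArg xv (hyvinj hex.choose_spec)
  have hrfib : ∀ t : Ω, (r ⁻¹' {t}).Finite := by
    intro t
    have hsub : r ⁻¹' {t} ⊆ insert t (yv '' {k | xv k = t}) := by
      intro w hw
      have hw' : r w = t := hw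
      by_cases h : ∃ j, yv j = w
      · right
        refine ⟨h.choose, ?_, h.choose_spec⟩
        show xv h.choose = t
        rw [← hw']
        simp only [hrdef, dif_pos h]
      · left
        rw [← hw']
        simp only [hrdef, dif_neg h]
    refine Set.Finite.subset (Set.Finite.insert t (Set.Finite.image yv ?_)) hsub
    exact Set.Subsingleton.finite (fun k1 hk1 k2 hk2 => hxvinj (hk1.trans hk2.symm))
  -- the map a
  set a : Function.End Ω := fun w => eA (2 * idx w) (E (r w)) with hadef
  have hua : ∀ w, u (a w) = αf (2 * idx w) := by
    intro w
    simp only [hadef]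
    exact heAu _ _
  have hasep : ∀ w1 w2, a w1 = a w2 → r w1 = r w2 := by
    intro w1 w2 h
    have hidx12 : idx w1 = idx w2 := by
      have h2 : αf (2 * idx w1) = αf (2 * idx w2) := by
        rw [← hua w1, ← hua w2, h]
      have := hαinj h2
      omega
    simp only [hadef, hidx12] at h
    exact E.injective (heAinj _ h)
  have hda : ℵ₀ ≤ defect a := by
    have hsub : u ⁻¹' {αf 1} ⊆ (Set.range a)ᶜ := by
      intro w hw hmem
      obtain ⟨x, hx⟩ := hmem
      have h2 : u w = αf 1 := hw
      rw [← hx] at h2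
      rw [hua x] at h2
      have := hαinj h2
      omega
    exact Cardinal.infinite_iff.mp (Set.infinite_coe_iff.mpr ((hAinf 1).mono hsub))
  have hax : ∀ k, a (xv k) = a (yv k) := by
    intro k
    have h1 : idx (xv k) = idx (yv k) := hidxf _ _ (by rw [hfx, hfy])
    simp only [hadef]
    rw [hrx k, hry k, h1]
  have hcla : ℵ₀ ≤ collapse a := aleph0_le_collapse_of_pairs xv yv hxyne hax hsep
  have hca : contract a < ℵ₀ := by
    have hempty : {q : Ω | (a ⁻¹' {q}).Infinite} = ∅ := by
      ext q
      simp only [Set.mem_setOf_eq, Set.mem_empty_iff_false, iff_false]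
      intro hq
      obtain ⟨w0, hw0⟩ := hq.nonempty
      have hsub : a ⁻¹' {q} ⊆ r ⁻¹' {r w0} := by
        intro w hw
        have h1 : a w = q := hw
        have h2 : a w0 = q := hw0
        exact hasep w w0 (h1.trans h2.symm)
      exact hq (Set.Finite.subset (hrfib (r w0)) hsub)
    have : contract a = #(∅ : Set Ω) := by rw [contract, hempty]
    rw [this, Cardinal.mk_emptyCollection]
    exact aleph0_pos
  have haS : a ∈ (S12345 : Set (Function.End Ω)) := by
    refine ⟨⟨⟨⟨?_, ?_⟩, ?_⟩, ?_⟩, ?_⟩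
    · exact Or.inr (aleph0_pos.trans_le hda)
    · exact Or.inl (aleph0_pos.trans_le hcla)
    · exact Or.inr hda
    · exact Or.inl hcla
    · exact hca
  -- the map m
  set z : Ω := s (F 0) with hzdef
  set m : Function.End Ω := fun w => if h : ∃ n, αf (2 * n) = w then s (F h.choose) else z
    with hmdef
  have hmval : ∀ n, m (αf (2 * n)) = s (F n) := by
    intro n
    have hex : ∃ j, αf (2 * j) = αf (2 * n) := ⟨n, rfl⟩
    have hch : hex.choose = n := by
      have := hαinj hex.choose_spec
      omega
    simp only [hmdef, dif_pos hex, hch]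
  have hran : Set.range m ⊆ Set.range s := by
    rintro q ⟨w, rfl⟩
    simp only [hmdef]
    split_ifs with h
    · exact ⟨F h.choose, rfl⟩
    · exact ⟨F 0, rfl⟩
  have hdm : ℵ₀ ≤ defect m :=
    le_trans hscompl (Cardinal.mk_le_mk_of_subset (Set.compl_subset_compl.mpr hran))
  have hWinf : ((Set.range fun n => αf (2 * n))ᶜ : Set Ω).Infinite := by
    apply Set.infinite_of_injective_forall_mem (f := fun k => αf (2 * k + 1))
    · intro k j h
      have := hαinj h
      omega
    · intro k hmem
      obtain ⟨n, hn⟩ := hmem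
      have := hαinj hn
      omega
  have hclm : ℵ₀ ≤ collapse m := by
    refine aleph0_le_collapse_of_fiber (z := z) hWinf ?_
    intro w hw
    have hno : ¬∃ n, αf (2 * n) = w := by
      rintro ⟨n, hn⟩
      exact hw ⟨n, hn⟩
    simp only [hmdef, dif_neg hno]
  have hcm : contract m < ℵ₀ := by
    have hsub : {q : Ω | (m ⁻¹' {q}).Infinite} ⊆ {z} := by
      intro q hq
      simp only [Set.mem_singleton_iff]
      by_contra hne
      apply hq
      have hss : (m ⁻¹' {q}).Subsingleton := by
        intro w1 h1 w2 h2
        have e1 : m w1 = q := h1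
        have e2 : m w2 = q := h2
        by_cases hx1 : ∃ n, αf (2 * n) = w1
        · by_cases hx2 : ∃ n, αf (2 * n) = w2
          · simp only [hmdef, dif_pos hx1] at e1
            simp only [hmdef, dif_pos hx2] at e2
            have hch : hx1.choose = hx2.choose := hFinj (hsinj (e1.trans e2.symm))
            rw [← hx1.choose_spec, ← hx2.choose_spec, hch]
          · simp only [hmdef, dif_neg hx2] at e2
            exact absurd e2.symm hne
        · simp only [hmdef, dif_neg hx1] at e1
          exact absurd e1.symm hne
      exact hss.finite
    have hle : contract m ≤ #({z} : Set Ω) := Cardinal.mk_le_mk_of_subset hsub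
    refine hle.trans_lt ?_
    rw [Cardinal.mk_singleton]
    exact one_lt_aleph0
  have hmS : m ∈ (S12345 : Set (Function.End Ω)) := by
    refine ⟨⟨⟨⟨?_, ?_⟩, ?_⟩, ?_⟩, ?_⟩
    · exact Or.inr (aleph0_pos.trans_le hdm)
    · exact Or.inl (aleph0_pos.trans_le hclm)
    · exact Or.inr hdm
    · exact Or.inl hclm
    · exact hcm
  -- the factorization
  have hfact : f = v * m * u * a := by
    funext w
    show f w = v (m (u (a w)))
    rw [hua w, hmval (idx w), hFidx w, hvs]
  have hX : (S12345 ∪ {u, v} : Set (Function.End Ω)) ⊆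
      Subsemigroup.closure (S12345 ∪ {u, v}) := Subsemigroup.subset_closure
  have hvmem : v ∈ Subsemigroup.closure (S12345 ∪ {u, v}) :=
    hX (Or.inr (by simp))
  have humem : u ∈ Subsemigroup.closure (S12345 ∪ {u, v}) :=
    hX (Or.inr (by simp))
  have hamem : a ∈ Subsemigroup.closure (S12345 ∪ {u, v}) := hX (Or.inl haS)
  have hmmem : m ∈ Subsemigroup.closure (S12345 ∪ {u, v}) := hX (Or.inl hmS)
  rw [hfact]
  exact mul_mem (mul_mem (mul_mem hvmem hmmem) humem) hamem
end

section
/- Let Ω be a countably infinite set and let u, v, t, f ∈ Ω^Ω. If k(u) = k(f) = ∞, c(v) = ∞, d(v) < ∞, c(t) > 0, and d(t) = 0, then f belongs to the subsemigroup of Ω^Ω generated by S_{1,2,3,4,5} ∪ {u, v, t}. -/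
/-!
Setting: `Ω` is a countably infinite set, `Function.End Ω = Ω → Ω` is the full
transformation semigroup (a subset is closed under composition in one order iff
it is closed in the other, so the lattice of subsemigroups is unaffected by the
left-to-right convention of the paper).
-/

open Cardinal

set_option linter.unusedSectionVars false

section Aux
variable {Ω : Type} [Countable Ω] [Infinite Ω]

lemma aleph0_le_mk_set {S : Set Ω} (h : S.Infinite) : ℵ₀ ≤ #S := by
  have := h.to_subtype
  exact Cardinal.aleph0_le_mk _

lemma mk_set_eq_aleph0 {S : Set Ω} (h : S.Infinite) : #S = ℵ₀ :=
  le_antisymm Cardinal.mk_le_aleph0 (aleph0_le_mk_set h)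

lemma exists_transversal (g : Ω → Ω) : ∃ T, IsTransversal g T := by
  classical
  have hNe : Nonempty Ω := inferInstance
  set sec : Ω → Ω := Function.invFun g with hsec
  have hg : ∀ y ∈ Set.range g, g (sec y) = y := fun y hy => Function.invFun_eq hy
  refine ⟨sec '' Set.range g, ?_, ?_⟩
  · rintro x ⟨y, hy, rfl⟩ x' ⟨y', hy', rfl⟩ h
    rw [hg y hy, hg y' hy'] at h; rw [h]
  · apply Set.eq_of_subset_of_subset
    · rintro _ ⟨_, ⟨y, hy, rfl⟩, rfl⟩; exact Set.mem_range_self _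
    · rintro y ⟨x, rfl⟩
      exact ⟨sec (g x), Set.mem_image_of_mem _ (Set.mem_range_self x),
        hg _ (Set.mem_range_self x)⟩

lemma collapse_le_mk {g : Ω → Ω} {T : Set Ω} (h : IsTransversal g T) :
    collapse g ≤ #(Tᶜ : Set Ω) :=
  ciInf_le (OrderBot.bddBelow _) (⟨T, h⟩ : {T : Set Ω // IsTransversal g T})

lemma le_collapse {g : Ω → Ω} {c : Cardinal}
    (h : ∀ T, IsTransversal g T → c ≤ #(Tᶜ : Set Ω)) : c ≤ collapse g := by
  have : Nonempty {T : Set Ω // IsTransversal g T} := by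
    obtain ⟨T, hT⟩ := exists_transversal g; exact ⟨⟨T, hT⟩⟩
  exact le_ciInf fun T => h T.1 T.2

lemma exists_bij_extend (R : Set Ω) (j w : Ω → Ω) (hj : Set.InjOn j R)
    (hw : Set.InjOn w R) (hcard : #(((j '' R)ᶜ : Set Ω)) = #(((w '' R)ᶜ : Set Ω))) :
    ∃ a : Function.End Ω, Function.Bijective a ∧ ∀ β ∈ R, a (j β) = w β := by
  classical
  obtain ⟨e⟩ := Cardinal.eq.mp hcard
  set a : Ω → Ω := fun x =>
    if h : x ∈ j '' R then w (Function.invFunOn j R x) else (e ⟨x, h⟩ : Ω) with ha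
  have key : ∀ β ∈ R, a (j β) = w β := by
    intro β hβ
    have hmem : j β ∈ j '' R := Set.mem_image_of_mem _ hβ
    have h1 : Function.invFunOn j R (j β) = β := hj.leftInvOn_invFunOn hβ
    simp only [ha, dif_pos hmem, h1]
  have hain : ∀ x ∈ j '' R, a x ∈ w '' R := by
    rintro _ ⟨β, hβ, rfl⟩; rw [key β hβ]; exact Set.mem_image_of_mem _ hβ
  have haout : ∀ x (h : x ∉ j '' R), a x = (e ⟨x, h⟩ : Ω) := by
    intro x h; simp only [ha, dif_neg h]
  refine ⟨a, ⟨?_, ?_⟩, key⟩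
  · intro x y hxy
    by_cases hx : x ∈ j '' R <;> by_cases hy : y ∈ j '' R
    · obtain ⟨β, hβ, rfl⟩ := hx; obtain ⟨γ, hγ, rfl⟩ := hy
      rw [key β hβ, key γ hγ] at hxy
      rw [hw hβ hγ hxy]
    · exact absurd (haout y hy ▸ hxy ▸ hain x hx) (e ⟨y, hy⟩).2
    · exact absurd ((haout x hx).symm ▸ hxy ▸ hain y hy) (e ⟨x, hx⟩).2
    · have := (haout x hx).symm.trans (hxy.trans (haout y hy))
      have := e.injective (Subtype.ext this)
      exact Subtype.ext_iff.mp this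
  · intro y
    by_cases hy : y ∈ w '' R
    · obtain ⟨β, hβ, rfl⟩ := hy; exact ⟨j β, key β hβ⟩
    · refine ⟨(e.symm ⟨y, hy⟩ : Ω), ?_⟩
      have hx : (e.symm ⟨y, hy⟩ : Ω) ∉ j '' R := (e.symm ⟨y, hy⟩).2
      rw [haout _ hx]
      simp

lemma exists_injOn_of_mk_eq {S U : Set Ω} (h : #S = #U) :
    ∃ σ : Ω → Ω, Set.InjOn σ S ∧ σ '' S = U := by
  classical
  obtain ⟨e⟩ := Cardinal.eq.mp h
  refine ⟨fun x => if hx : x ∈ S then (e ⟨x, hx⟩ : Ω) else x, ?_, ?_⟩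
  · intro x hx y hy hxy
    simp only [dif_pos hx, dif_pos hy] at hxy
    exact Subtype.ext_iff.mp (e.injective (Subtype.ext hxy))
  · apply Set.eq_of_subset_of_subset
    · rintro _ ⟨x, hx, rfl⟩; simp only [dif_pos hx]; exact (e ⟨x, hx⟩).2
    · intro y hy
      refine ⟨(e.symm ⟨y, hy⟩ : Ω), (e.symm ⟨y, hy⟩).2, ?_⟩
      simp only [dif_pos (e.symm ⟨y, hy⟩).2, Subtype.coe_eta, Equiv.apply_symm_apply]

lemma bijective_mem_S12345 {g : Function.End Ω} (h : Function.Bijective g) :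
    g ∈ S12345 := by
  have hd : defect g = 0 := by
    have : (Set.range g)ᶜ = (∅ : Set Ω) := by
      rw [Set.range_eq_univ.mpr h.surjective, Set.compl_univ]
    show #((Set.range g)ᶜ : Set Ω) = 0
    rw [this]; exact Cardinal.mk_emptyCollection _
  have hT : IsTransversal g Set.univ := ⟨h.injective.injOn, by exact Set.image_univ⟩
  have hc : collapse g = 0 := by
    apply le_antisymm _ zero_le
    have := collapse_le_mk hT
    simpa using this
  have hk : contract g = 0 := by
    have : {α : Ω | (g ⁻¹' {α}).Infinite} = ∅ := by
      ext α
      simp only [Set.mem_setOf_eq, Set.mem_empty_iff_false, iff_false]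
      intro hinf
      exact hinf ((Set.finite_singleton α).preimage h.injective.injOn)
    show #({α : Ω | (g ⁻¹' {α}).Infinite} : Set Ω) = 0
    rw [this]; exact Cardinal.mk_emptyCollection _
  refine ⟨⟨⟨⟨Or.inl hc, Or.inr hd⟩, Or.inl (by rw [hc]; exact aleph0_pos)⟩,
    Or.inr (by rw [hd]; exact aleph0_pos)⟩, ?_⟩
  show contract g < ℵ₀
  rw [hk]; exact aleph0_pos

end Aux

theorem stmt14 (Ω : Type) [Countable Ω] [Infinite Ω] (u v t f : Function.End Ω)
    (hku : ℵ₀ ≤ contract u) (hkf : ℵ₀ ≤ contract f)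
    (hcv : ℵ₀ ≤ collapse v) (hdv : defect v < ℵ₀)
    (hct : 0 < collapse t) (hdt : defect t = 0) :
    f ∈ Subsemigroup.closure (S12345 ∪ {u, v, t}) := by
  classical
  have hNe : Nonempty Ω := inferInstance
  set gens : Set (Function.End Ω) := S12345 ∪ {u, v, t} with hgens
  have hgen_u : u ∈ gens := Set.mem_union_right _ (by simp)
  have hgen_v : v ∈ gens := Set.mem_union_right _ (by simp)
  have hgen_t : t ∈ gens := Set.mem_union_right _ (by simp)
  have hS : ∀ g : Function.End Ω, g ∈ S12345 → g ∈ Subsemigroup.closure gens :=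
    fun g hg => Subsemigroup.subset_closure (Set.mem_union_left _ hg)
  -- structure of u
  have hKu : ({α : Ω | (u ⁻¹' {α}).Infinite}).Infinite :=
    Set.infinite_coe_iff.mp (Cardinal.aleph0_le_mk_iff.mp hku)
  set Aemb : ℕ ↪ _ := Set.Infinite.natEmbedding _ hKu with hAemb
  set A : ℕ → Ω := fun n => (Aemb n : Ω) with hA
  have hAinj : Function.Injective A := fun m n h => Aemb.injective (Subtype.ext h)
  have hAmem : ∀ n, (u ⁻¹' {A n}).Infinite := fun n => (Aemb n).2
  obtain ⟨ι, hι⟩ := exists_injective_nat Ω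
  have hP : ∀ β : Ω, (u ⁻¹' {A (2 * ι β)}).Infinite := fun β => hAmem _
  set p : Ω → ℕ → Ω := fun β m => ((Set.Infinite.natEmbedding _ (hP β)) m : Ω) with hp
  have hpmem : ∀ β m, u (p β m) = A (2 * ι β) := by
    intro β m
    exact ((Set.Infinite.natEmbedding _ (hP β)) m).2
  have hpinj : ∀ β, Function.Injective (p β) :=
    fun β m m' h => (Set.Infinite.natEmbedding _ (hP β)).injective (Subtype.ext h)
  have hkey : ∀ {β m β' m'}, p β m = p β' m' → β = β' := by
    intro β m β' m' h
    have h2 : A (2 * ι β) = A (2 * ι β') := by rw [← hpmem β m, ← hpmem β' m', h]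
    have := hAinj h2
    exact hι (by omega)
  -- structure of f
  set R : Set Ω := Set.range f with hR
  have hKf : ({α : Ω | (f ⁻¹' {α}).Infinite}).Infinite :=
    Set.infinite_coe_iff.mp (Cardinal.aleph0_le_mk_iff.mp hkf)
  obtain ⟨β₀, hβ₀⟩ := hKf.nonempty
  have hβ₀' : (f ⁻¹' {β₀}).Infinite := hβ₀
  have hRinf : R.Infinite := by
    apply hKf.mono
    intro α hα
    obtain ⟨x, hx⟩ := (hα : (f ⁻¹' {α}).Infinite).nonempty
    exact ⟨x, hx⟩
  -- the coding map j
  set j : Ω → Ω := fun β => A (2 * ι β) with hj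
  have hjinj : Function.Injective j := by
    intro β β' h
    have := hAinj h
    exact hι (by omega)
  have hjcompl : ((j '' R)ᶜ : Set Ω).Infinite := by
    apply Set.infinite_of_injective_forall_mem (f := fun m : ℕ => A (2 * m + 1))
    · intro m m' h; have := hAinj h; omega
    · intro m
      simp only [Set.mem_compl_iff]
      rintro ⟨β, hβ, heq⟩
      have := hAinj heq
      omega
  -- the map b
  set b : Function.End Ω := fun x => if f x = β₀ then p β₀ 0 else p (f x) (ι x) with hbdef
  have hub : ∀ x, u (b x) = j (f x) := by
    intro x
    by_cases hx : f x = β₀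
    · show u (if f x = β₀ then p β₀ 0 else p (f x) (ι x)) = j (f x)
      rw [if_pos hx, hpmem, hx]
    · show u (if f x = β₀ then p β₀ 0 else p (f x) (ι x)) = j (f x)
      rw [if_neg hx, hpmem]
  have hbval : ∀ x, f x = β₀ → b x = p β₀ 0 := by
    intro x hx
    show (if f x = β₀ then p β₀ 0 else p (f x) (ι x)) = p β₀ 0
    rw [if_pos hx]
  have hbval' : ∀ x, ¬ (f x = β₀) → b x = p (f x) (ι x) := by
    intro x hx
    show (if f x = β₀ then p β₀ 0 else p (f x) (ι x)) = p (f x) (ι x)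
    rw [if_neg hx]
  have hbcases : ∀ x y, b x = b y → x = y ∨ (f x = β₀ ∧ f y = β₀) := by
    intro x y h
    by_cases hx : f x = β₀ <;> by_cases hy : f y = β₀
    · exact Or.inr ⟨hx, hy⟩
    · rw [hbval x hx, hbval' y hy] at h
      exact absurd (hkey h).symm hy
    · rw [hbval' x hx, hbval y hy] at h
      exact absurd (hkey h) hx
    · rw [hbval' x hx, hbval' y hy] at h
      have hf : f x = f y := hkey h
      rw [hf] at h
      exact Or.inl (hι (hpinj _ h))
  have hdb : ((Set.range b)ᶜ : Set Ω).Infinite := by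
    apply Set.infinite_of_injective_forall_mem (f := fun m : ℕ => p β₀ (m + 1))
    · intro m m' h
      have := hpinj β₀ h
      omega
    · intro m
      simp only [Set.mem_compl_iff]
      rintro ⟨x, hx⟩
      by_cases hfx : f x = β₀
      · rw [hbval x hfx] at hx
        have := hpinj β₀ hx
        omega
      · rw [hbval' x hfx] at hx
        exact hfx (hkey hx)
  have hcb : ℵ₀ ≤ collapse b := by
    apply le_collapse
    intro T hT
    apply aleph0_le_mk_set
    have hsub : (f ⁻¹' {β₀} ∩ T).Subsingleton := by
      intro x hx y hy
      apply hT.1 hx.2 hy.2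
      rw [hbval x hx.1, hbval y hy.1]
    have h2 : f ⁻¹' {β₀} \ T = f ⁻¹' {β₀} \ (f ⁻¹' {β₀} ∩ T) := by
      ext z; simp only [Set.mem_diff, Set.mem_inter_iff]; tauto
    have hinf2 : (f ⁻¹' {β₀} \ T).Infinite := by
      rw [h2]; exact hβ₀'.diff hsub.finite
    exact Set.Infinite.mono (fun z hz => hz.2) hinf2
  have hbmem : b ∈ S12345 := by
    have hdbig : ℵ₀ ≤ defect b := aleph0_le_mk_set hdb
    refine ⟨⟨⟨⟨Or.inr (lt_of_lt_of_le aleph0_pos hdbig),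
      Or.inl (lt_of_lt_of_le aleph0_pos hcb)⟩, Or.inr hdbig⟩, Or.inl hcb⟩, ?_⟩
    show contract b < ℵ₀
    have hsub : {α : Ω | (b ⁻¹' {α}).Infinite} ⊆ {p β₀ 0} := by
      intro α hα
      obtain ⟨x, hx, y, hy, hxy⟩ := (hα : (b ⁻¹' {α}).Infinite).nontrivial
      have hbx : b x = α := hx
      have hby : b y = α := hy
      rcases hbcases x y (hbx.trans hby.symm) with h | h
      · exact absurd h hxy
      · rw [← hbx, hbval x h.1]
        rfl
    exact lt_of_le_of_lt (le_trans (Cardinal.mk_le_mk_of_subset hsub)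
      (le_of_eq (Cardinal.mk_singleton _))) one_lt_aleph0
  -- structure of t
  have htsurj : Function.Surjective t := by
    have h1 : ((Set.range t)ᶜ : Set Ω) = ∅ :=
      Set.isEmpty_coe_sort.mp (Cardinal.mk_eq_zero_iff.mp hdt)
    exact Set.range_eq_univ.mp (Set.compl_empty_iff.mp h1)
  set st : Ω → Ω := Function.invFun t with hstdef
  have hst : ∀ y, t (st y) = y := fun y => Function.invFun_eq (htsurj y)
  have hstinj : Function.Injective st := fun a c h => by rw [← hst a, ← hst c, h]
  have hTt : IsTransversal t (Set.range st) := by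
    constructor
    · rintro x ⟨a, rfl⟩ y ⟨c, rfl⟩ h
      rw [hst a, hst c] at h; rw [h]
    · apply Set.eq_of_subset_of_subset
      · rintro _ ⟨_, ⟨a, rfl⟩, rfl⟩; exact Set.mem_range_self _
      · rintro y ⟨x, rfl⟩
        exact ⟨st (t x), Set.mem_range_self _, hst (t x)⟩
  have htc_pos : 0 < #((Set.range st)ᶜ : Set Ω) := lt_of_lt_of_le hct (collapse_le_mk hTt)
  -- main case split
  by_cases hTtinf : ((Set.range st)ᶜ : Set Ω).Infinite
  · -- Case 2a : the complement of the transversal of t is infinite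
    have hstcompl : ((st '' R)ᶜ : Set Ω).Infinite := by
      apply Set.Infinite.mono (Set.compl_subset_compl.mpr (Set.image_subset_range st R)) hTtinf
    obtain ⟨a, habij, haeq⟩ := exists_bij_extend R j st hjinj.injOn hstinj.injOn
      (by rw [mk_set_eq_aleph0 hjcompl, mk_set_eq_aleph0 hstcompl])
    have hfeq : f = t * (a * (u * b)) := by
      funext x
      show f x = t (a (u (b x)))
      rw [hub x, haeq (f x) (Set.mem_range_self x), hst]
    rw [hfeq]
    exact mul_mem (Subsemigroup.subset_closure hgen_t)
      (mul_mem (hS a (bijective_mem_S12345 habij))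
        (mul_mem (Subsemigroup.subset_closure hgen_u) (hS b hbmem)))
  by_cases hdf : ℵ₀ ≤ defect f
  · -- Case 1 : infinite defect
    have hRcinf : ((Rᶜ : Set Ω)).Infinite :=
      Set.infinite_coe_iff.mp (Cardinal.aleph0_le_mk_iff.mp hdf)
    obtain ⟨a, habij, haeq⟩ := exists_bij_extend R j id hjinj.injOn Function.injective_id.injOn
      (by rw [Set.image_id, mk_set_eq_aleph0 hjcompl, mk_set_eq_aleph0 hRcinf])
    have hfeq : f = a * (u * b) := by
      funext x
      show f x = a (u (b x))
      rw [hub x, haeq (f x) (Set.mem_range_self x)]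
      rfl
    rw [hfeq]
    exact mul_mem (hS a (bijective_mem_S12345 habij))
      (mul_mem (Subsemigroup.subset_closure hgen_u) (hS b hbmem))
  -- Case 2b : finite defect, finite transversal complement for t
  push_neg at hdf
  have hTtfin : ((Set.range st)ᶜ : Set Ω).Finite := Set.not_infinite.mp hTtinf
  -- structure of v
  set sv : Ω → Ω := Function.invFun v with hsvdef
  have hsvv : ∀ y ∈ Set.range v, v (sv y) = y := fun y hy => Function.invFun_eq hy
  have hsvinj : Set.InjOn sv (Set.range v) := by
    intro y hy y' hy' h
    rw [← hsvv y hy, ← hsvv y' hy', h]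
  have hTv : IsTransversal v (sv '' Set.range v) := by
    constructor
    · rintro x ⟨y, hy, rfl⟩ x' ⟨y', hy', rfl⟩ h
      rw [hsvv y hy, hsvv y' hy'] at h; rw [h]
    · apply Set.eq_of_subset_of_subset
      · rintro _ ⟨_, ⟨y, hy, rfl⟩, rfl⟩
        rw [hsvv y hy]; exact hy
      · rintro y ⟨x, rfl⟩
        have hy : v x ∈ Set.range v := Set.mem_range_self x
        exact ⟨sv (v x), Set.mem_image_of_mem _ hy, hsvv _ hy⟩
  have hTvcinf : ((sv '' Set.range v)ᶜ : Set Ω).Infinite :=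
    Set.infinite_coe_iff.mp (Cardinal.aleph0_le_mk_iff.mp (le_trans hcv (collapse_le_mk hTv)))
  -- cardinal bookkeeping
  set c0 : Cardinal := #((Set.range st)ᶜ : Set Ω) with hc0def
  have hc0lt : c0 < ℵ₀ := Cardinal.lt_aleph0_iff_set_finite.mpr hTtfin
  set n : ℕ := (#((Rᶜ : Set Ω))).toNat with hndef
  set dv : ℕ := (defect v).toNat with hdvdef
  set c0n : ℕ := c0.toNat with hc0ndef
  have hRdefect : defect f = #((Rᶜ : Set Ω)) := rfl
  have hdf' : #((Rᶜ : Set Ω)) < ℵ₀ := hRdefect ▸ hdf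
  have hncast : ((n : Cardinal)) = #((Rᶜ : Set Ω)) := Cardinal.cast_toNat_of_lt_aleph0 hdf'
  have hdvcast : ((dv : Cardinal)) = defect v := Cardinal.cast_toNat_of_lt_aleph0 hdv
  have hc0cast : ((c0n : Cardinal)) = c0 := Cardinal.cast_toNat_of_lt_aleph0 hc0lt
  have hc0pos : 1 ≤ c0n := by
    by_contra h
    have h0 : c0n = 0 := by omega
    rw [← hc0cast, h0] at htc_pos
    simp at htc_pos
  have hrvinf : (Set.range v).Infinite := by
    have h1 : (((Set.range v)ᶜ : Set Ω)).Finite := Cardinal.lt_aleph0_iff_set_finite.mp hdv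
    by_contra hfin
    have h2 : (Set.range v).Finite := Set.not_infinite.mp hfin
    have h3 : (Set.range v ∪ (Set.range v)ᶜ).Finite := h2.union h1
    rw [Set.union_compl_self] at h3
    exact Set.infinite_univ h3
  obtain ⟨G, hGsub, hGcard⟩ := Cardinal.le_mk_iff_exists_subset.mp
    (le_trans (Cardinal.nat_lt_aleph0 (n + dv * c0n - dv)).le (aleph0_le_mk_set hrvinf))
  have hGfin : G.Finite := Cardinal.lt_aleph0_iff_set_finite.mp
    (by rw [hGcard]; exact Cardinal.nat_lt_aleph0 _)
  set D : Set Ω := Set.range v \ G with hD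
  have hDinf : D.Infinite := hrvinf.diff hGfin
  obtain ⟨σ, hσinj, hσim⟩ := exists_injOn_of_mk_eq (S := R) (U := D)
    (by rw [mk_set_eq_aleph0 hRinf, mk_set_eq_aleph0 hDinf])
  have hDcompl : #((Dᶜ : Set Ω)) = ((n + dv * c0n : ℕ) : Cardinal) := by
    have h1 : (Dᶜ : Set Ω) = (Set.range v)ᶜ ∪ G := by
      ext x
      simp only [hD, Set.mem_compl_iff, Set.mem_diff, Set.mem_union, not_and, not_not]
      constructor
      · intro h
        by_cases hx : x ∈ Set.range v
        · exact Or.inr (h hx)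
        · exact Or.inl hx
      · rintro (h | h)
        · intro hx; exact absurd hx h
        · intro _; exact h
    have hdisj : Disjoint ((Set.range v)ᶜ : Set Ω) G :=
      Set.disjoint_left.mpr (fun x hx hxG => hx (hGsub hxG))
    rw [h1, Cardinal.mk_union_of_disjoint hdisj, hGcard]
    have : #(((Set.range v)ᶜ : Set Ω)) = ((dv : Cardinal)) := hdvcast.symm
    rw [this, ← Nat.cast_add]
    congr 1
    have : dv ≤ n + dv * c0n := by
      have h5 : dv * 1 ≤ dv * c0n := Nat.mul_le_mul_left dv hc0pos
      omega
    omega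
  -- the key induction on the number of applications of t
  have lemC : ∀ (k' : ℕ) (W : Set Ω) (χ : Ω → Ω), Set.InjOn χ W → χ '' W = R →
      #((Wᶜ : Set Ω)) = #((Rᶜ : Set Ω)) + (k' : Cardinal) * c0 →
      ∃ M ∈ Subsemigroup.closure gens, ∀ x ∈ W, M x = χ x := by
    intro k'
    induction k' with
    | zero =>
      intro W χ hχinj hχim hWc
      obtain ⟨M, hMbij, hMeq⟩ := exists_bij_extend W id χ Function.injective_id.injOn hχinj
        (by rw [Set.image_id, hχim]; simpa using hWc)
      exact ⟨M, hS M (bijective_mem_S12345 hMbij), fun x hx => hMeq x hx⟩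
    | succ k' ih =>
      intro W χ hχinj hχim hWc
      have hTtinf' : (Set.range st).Infinite := Set.infinite_range_of_injective hstinj
      have hflt : #((Rᶜ : Set Ω)) + (k' : Cardinal) * c0 < ℵ₀ :=
        Cardinal.add_lt_aleph0 hdf' (Cardinal.mul_lt_aleph0 (Cardinal.nat_lt_aleph0 _) hc0lt)
      obtain ⟨F, hFsub, hFcard⟩ := Cardinal.le_mk_iff_exists_subset.mp
        (le_trans hflt.le (aleph0_le_mk_set hTtinf'))
      have hFfin : F.Finite := Cardinal.lt_aleph0_iff_set_finite.mp (by rw [hFcard]; exact hflt)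
      set D' : Set Ω := Set.range st \ F with hD'
      have hWcfin : ((Wᶜ : Set Ω)).Finite := by
        apply Cardinal.lt_aleph0_iff_set_finite.mp
        rw [hWc]
        exact Cardinal.add_lt_aleph0 hdf' (Cardinal.mul_lt_aleph0 (Cardinal.nat_lt_aleph0 _) hc0lt)
      have hWinf : W.Infinite := by
        have := hWcfin.infinite_compl
        rwa [compl_compl] at this
      have hDinf' : D'.Infinite := hTtinf'.diff hFfin
      obtain ⟨σ', hσ'inj, hσ'im⟩ := exists_injOn_of_mk_eq (S := W) (U := D')
        (by rw [mk_set_eq_aleph0 hWinf, mk_set_eq_aleph0 hDinf'])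
      have hD'compl : #((D'ᶜ : Set Ω)) = #((Rᶜ : Set Ω)) + ((k' : Cardinal) + 1) * c0 := by
        have h1 : (D'ᶜ : Set Ω) = (Set.range st)ᶜ ∪ F := by
          ext x
          simp only [hD', Set.mem_compl_iff, Set.mem_diff, Set.mem_union, not_and, not_not]
          constructor
          · intro h
            by_cases hx : x ∈ Set.range st
            · exact Or.inr (h hx)
            · exact Or.inl hx
          · rintro (h | h)
            · intro hx; exact absurd hx h
            · intro _; exact h
        have hdisj : Disjoint ((Set.range st)ᶜ : Set Ω) F :=
          Set.disjoint_left.mpr (fun x hx hxF => hx (hFsub hxF))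
        rw [h1, Cardinal.mk_union_of_disjoint hdisj, hFcard, ← hc0def]
        ring
      obtain ⟨r, hrbij, hreq0⟩ := exists_bij_extend W id σ' Function.injective_id.injOn hσ'inj
        (by rw [Set.image_id, hσ'im, hD'compl, hWc]; push_cast; ring)
      have hreq : ∀ x ∈ W, r x = σ' x := fun x hx => hreq0 x hx
      have hrW : ∀ x ∈ W, r x ∈ D' := by
        intro x hx
        rw [hreq x hx]
        rw [← hσ'im]
        exact Set.mem_image_of_mem _ hx
      set g : Ω → Ω := fun x => t (r x) with hg
      have hginW : Set.InjOn g W := by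
        intro x hx y hy hxy
        have h1 : r x = r y := by
          apply hTt.1 ((hrW x hx).1) ((hrW y hy).1) hxy
        exact hrbij.injective h1
      set W' : Set Ω := g '' W with hW'
      set χ' : Ω → Ω := fun y => χ (Function.invFunOn g W y) with hχ'
      have hinv : ∀ x ∈ W, Function.invFunOn g W (g x) = x :=
        fun x hx => hginW.leftInvOn_invFunOn hx
      have hχ'g : ∀ x ∈ W, χ' (g x) = χ x := by
        intro x hx
        show χ (Function.invFunOn g W (g x)) = χ x
        rw [hinv x hx]
      have hχ'inj : Set.InjOn χ' W' := by
        rintro _ ⟨x, hx, rfl⟩ _ ⟨y, hy, rfl⟩ h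
        rw [hχ'g x hx, hχ'g y hy] at h
        rw [hχinj hx hy h]
      have hχ'im : χ' '' W' = R := by
        rw [hW', ← Set.image_comp]
        rw [← hχim]
        apply Set.image_congr
        intro x hx
        exact hχ'g x hx
      have hW'c : #((W'ᶜ : Set Ω)) = #((Rᶜ : Set Ω)) + (k' : Cardinal) * c0 := by
        have himg : g '' W = t '' D' := by
          apply Set.eq_of_subset_of_subset
          · rintro _ ⟨x, hx, rfl⟩
            exact Set.mem_image_of_mem _ (hrW x hx)
          · rintro _ ⟨d, hd, rfl⟩
            rw [← hσ'im] at hd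
            obtain ⟨x, hx, rfl⟩ := hd
            exact ⟨x, hx, by rw [hg]; simp only []; rw [hreq x hx]⟩
        have h1 : (W'ᶜ : Set Ω) = t '' F := by
          rw [hW', himg]
          ext y
          simp only [Set.mem_compl_iff]
          constructor
          · intro hy
            have h2 : st y ∈ Set.range st := Set.mem_range_self y
            by_cases h3 : st y ∈ F
            · exact ⟨st y, h3, hst y⟩
            · exfalso
              apply hy
              exact ⟨st y, ⟨h2, h3⟩, hst y⟩
          · rintro ⟨z, hz, rfl⟩ ⟨d, hd, hdz⟩
            have : d = z := hTt.1 hd.1 (hFsub hz) hdz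
            rw [this] at hd
            exact hd.2 hz
        rw [h1, Cardinal.mk_image_eq_of_injOn _ _ (hTt.1.mono hFsub), hFcard]
      obtain ⟨M', hM'mem, hM'eq⟩ := ih W' χ' hχ'inj hχ'im hW'c
      refine ⟨M' * t * r, ?_, ?_⟩
      · exact mul_mem (mul_mem hM'mem (Subsemigroup.subset_closure hgen_t))
          (hS r (bijective_mem_S12345 hrbij))
      · intro x hx
        show M' (t (r x)) = χ x
        have h4 : t (r x) = g x := rfl
        rw [h4, hM'eq (g x) (Set.mem_image_of_mem _ hx), hχ'g x hx]
  -- assemble case 2b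
  set wfun : Ω → Ω := fun β => sv (σ β) with hwfun
  have hσD : ∀ β ∈ R, σ β ∈ D := by
    intro β hβ
    rw [← hσim]
    exact Set.mem_image_of_mem _ hβ
  have hwinj : Set.InjOn wfun R := by
    intro β hβ γ hγ h
    have h1 : σ β = σ γ := hsvinj (hσD β hβ).1 (hσD γ hγ).1 h
    exact hσinj hβ hγ h1
  have hwcompl : ((wfun '' R)ᶜ : Set Ω).Infinite := by
    apply Set.Infinite.mono _ hTvcinf
    apply Set.compl_subset_compl.mpr
    rintro _ ⟨β, hβ, rfl⟩
    exact Set.mem_image_of_mem _ (hσD β hβ).1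
  obtain ⟨a, habij, haeq⟩ := exists_bij_extend R j wfun hjinj.injOn hwinj
    (by rw [mk_set_eq_aleph0 hjcompl, mk_set_eq_aleph0 hwcompl])
  set χ : Ω → Ω := fun y => Function.invFunOn σ R y with hχdef
  have hχinv : ∀ β ∈ R, χ (σ β) = β := fun β hβ => hσinj.leftInvOn_invFunOn hβ
  have hχinj : Set.InjOn χ D := by
    rw [← hσim]
    rintro _ ⟨β, hβ, rfl⟩ _ ⟨γ, hγ, rfl⟩ h
    rw [hχinv β hβ, hχinv γ hγ] at h
    rw [h]
  have hχim : χ '' D = R := by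
    rw [← hσim, ← Set.image_comp]
    apply Set.eq_of_subset_of_subset
    · rintro _ ⟨β, hβ, rfl⟩
      show χ (σ β) ∈ R
      rw [hχinv β hβ]; exact hβ
    · intro β hβ
      exact ⟨β, hβ, hχinv β hβ⟩
  have hDc : #((Dᶜ : Set Ω)) = #((Rᶜ : Set Ω)) + (dv : Cardinal) * c0 := by
    rw [hDcompl, ← hncast, ← hc0cast]
    push_cast
    ring
  obtain ⟨M, hMmem, hMeq⟩ := lemC dv D χ hχinj hχim hDc
  have hfeq : f = M * (v * (a * (u * b))) := by
    funext x
    show f x = M (v (a (u (b x))))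
    rw [hub x, haeq (f x) (Set.mem_range_self x)]
    have h1 : σ (f x) ∈ D := hσD (f x) (Set.mem_range_self x)
    show f x = M (v (sv (σ (f x))))
    rw [hsvv _ h1.1, hMeq _ h1, hχinv (f x) (Set.mem_range_self x)]
  rw [hfeq]
  exact mul_mem hMmem
    (mul_mem (Subsemigroup.subset_closure hgen_v)
      (mul_mem (hS a (bijective_mem_S12345 habij))
        (mul_mem (Subsemigroup.subset_closure hgen_u) (hS b hbmem))))
end

section
/- Let Ω be a countably infinite set. A subsemigroup M of Ω^Ω with S_{1,2,3,4,5} ⊆ M ⊊ S_4 is a maximal subsemigroup of S_4 (i.e. there is no subsemigroup T with M ⊊ T ⊊ S_4) if and only if M is one of V, S_{2,4}, S_{3,4}, S_{4,5}. -/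
/-!
Setting: `Ω` is a countably infinite set, `Function.End Ω = Ω → Ω` is the full
transformation semigroup (a subset is closed under composition in one order iff
it is closed in the other, so the lattice of subsemigroups is unaffected by the
left-to-right convention of the paper).
-/

open Cardinal

namespace Px
variable {Ω : Type*}

open Classical in
/-- representative picker relative to a set `T`. -/
noncomputable def repAux (f : Ω → Ω) (T : Set Ω) (z : Ω) : Ω :=
  if h : ∃ t, t ∈ T ∧ f t = z then h.choose else z

noncomputable def rep (f : Ω → Ω) (T : Set Ω) (x : Ω) : Ω := repAux f T (f x)

theorem rep_eq (f : Ω → Ω) (T : Set Ω) {x y : Ω} (h : f x = f y) :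
    rep f T x = rep f T y := by unfold rep; rw [h]

theorem rep_spec {f : Ω → Ω} {T : Set Ω} {x : Ω} (h : ∃ t, t ∈ T ∧ f t = f x) :
    rep f T x ∈ T ∧ f (rep f T x) = f x := by
  have : rep f T x = h.choose := by
    unfold rep repAux
    rw [dif_pos h]
  rw [this]
  exact h.choose_spec

theorem rep_total {f : Ω → Ω} {T : Set Ω} (hT : IsTransversal f T) (x : Ω) :
    rep f T x ∈ T ∧ f (rep f T x) = f x := by
  apply rep_spec
  have : f x ∈ f '' T := by rw [hT.2]; exact ⟨x, rfl⟩
  obtain ⟨t, ht, he⟩ := this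
  exact ⟨t, ht, he⟩

theorem rep_mem_self {f : Ω → Ω} {T : Set Ω} (hT : IsTransversal f T) {t : Ω} (ht : t ∈ T) :
    rep f T t = t := by
  have h := rep_total hT t
  exact hT.1 h.1 ht h.2

theorem exists_transversal (f : Ω → Ω) : ∃ T, IsTransversal f T := by
  refine ⟨Set.range (rep f Set.univ), ?_, ?_⟩
  · rintro _ ⟨x, rfl⟩ _ ⟨y, rfl⟩ h
    have hx := (rep_spec (f := f) (T := Set.univ) (x := x) ⟨x, trivial, rfl⟩).2
    have hy := (rep_spec (f := f) (T := Set.univ) (x := y) ⟨y, trivial, rfl⟩).2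
    exact rep_eq f Set.univ (hx ▸ hy ▸ h)
  · apply Set.eq_of_subset_of_subset (Set.image_subset_range _ _)
    rintro _ ⟨x, rfl⟩
    have hx := (rep_spec (f := f) (T := Set.univ) (x := x) ⟨x, trivial, rfl⟩).2
    exact ⟨rep f Set.univ x, ⟨x, rfl⟩, hx⟩

/-- Extend an injective-on set to a transversal. -/
theorem extend_transversal {f : Ω → Ω} {S : Set Ω} (hS : Set.InjOn f S) :
    ∃ T, S ⊆ T ∧ IsTransversal f T := by
  refine ⟨S ∪ rep f Set.univ '' {x | f x ∉ f '' S}, Set.subset_union_left, ?_, ?_⟩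
  · rintro u hu v hv huv
    rcases hu with hu | ⟨x, hx, rfl⟩ <;> rcases hv with hv | ⟨y, hy, rfl⟩
    · exact hS hu hv huv
    · have hy2 := (rep_spec (f := f) (T := Set.univ) (x := y) ⟨y, trivial, rfl⟩).2
      exact absurd ⟨u, hu, huv.trans hy2⟩ hy
    · have hx2 := (rep_spec (f := f) (T := Set.univ) (x := x) ⟨x, trivial, rfl⟩).2
      exact absurd ⟨v, hv, huv.symm.trans hx2⟩ hx
    · have hx2 := (rep_spec (f := f) (T := Set.univ) (x := x) ⟨x, trivial, rfl⟩).2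
      have hy2 := (rep_spec (f := f) (T := Set.univ) (x := y) ⟨y, trivial, rfl⟩).2
      exact rep_eq f Set.univ (hx2 ▸ hy2 ▸ huv)
  · apply Set.eq_of_subset_of_subset (Set.image_subset_range _ _)
    rintro _ ⟨x, rfl⟩
    by_cases h : f x ∈ f '' S
    · obtain ⟨s, hs, he⟩ := h
      exact ⟨s, Or.inl hs, he⟩
    · have hx2 := (rep_spec (f := f) (T := Set.univ) (x := x) ⟨x, trivial, rfl⟩).2
      exact ⟨rep f Set.univ x, Or.inr ⟨x, h, rfl⟩, hx2⟩

/-- Any two transversals have complements of equal size (one direction). -/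
theorem transversal_compl_le {f : Ω → Ω} {T T' : Set Ω}
    (hT : IsTransversal f T) (hT' : IsTransversal f T') :
    #(Tᶜ : Set Ω) ≤ #(T'ᶜ : Set Ω) := by
  classical
  have ha1 : ∀ x, rep f T x ∈ T := fun x => (rep_total hT x).1
  have ha2 : ∀ x, f (rep f T x) = f x := fun x => (rep_total hT x).2
  have hb1 : ∀ x, rep f T' x ∈ T' := fun x => (rep_total hT' x).1
  have hb2 : ∀ x, f (rep f T' x) = f x := fun x => (rep_total hT' x).2
  have memT : ∀ x : Ω, x ∈ T ↔ x = rep f T x := by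
    intro x
    constructor
    · intro hx; exact (rep_mem_self hT hx).symm
    · intro hx; rw [hx]; exact ha1 x
  have memT' : ∀ x : Ω, x ∈ T' ↔ x = rep f T' x := by
    intro x
    constructor
    · intro hx; exact (rep_mem_self hT' hx).symm
    · intro hx; rw [hx]; exact hb1 x
  have key : ∀ x : Ω, x ∈ Tᶜ →
      (if x = rep f T' x then rep f T x else x) ∈ T'ᶜ := by
    intro x hx
    by_cases h2 : x = rep f T' x
    · rw [if_pos h2]
      intro hmem
      have : rep f T x = rep f T' (rep f T x) := (memT' _).1 hmem
      rw [rep_eq f T' (ha2 x), ← h2] at this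
      exact hx ((memT x).2 this.symm)
    · rw [if_neg h2]
      exact fun hmem => h2 ((memT' x).1 hmem)
  refine Cardinal.mk_le_of_injective (f := fun x : ↥(Tᶜ) =>
    (⟨if (x : Ω) = rep f T' (x : Ω) then rep f T (x : Ω) else (x : Ω), key x x.2⟩ : ↥(T'ᶜ))) ?_
  rintro ⟨x, hx⟩ ⟨y, hy⟩ hxy
  simp only [Subtype.mk.injEq] at hxy
  apply Subtype.ext
  by_cases h1 : x = rep f T' x <;> by_cases h2 : y = rep f T' y
  · rw [if_pos h1, if_pos h2] at hxy
    have : f x = f y := by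
      rw [← ha2 x, ← ha2 y, hxy]
    show x = y
    rw [h1, h2]
    exact rep_eq f T' this
  · rw [if_pos h1, if_neg h2] at hxy
    exfalso
    have hyy : rep f T y = y := by rw [← hxy, rep_eq f T (ha2 x)]
    exact hy ((memT y).2 hyy.symm)
  · rw [if_neg h1, if_pos h2] at hxy
    exfalso
    have hxx : rep f T x = x := by rw [hxy, rep_eq f T (ha2 y)]
    exact hx ((memT x).2 hxx.symm)
  · rw [if_neg h1, if_neg h2] at hxy
    exact hxy

theorem transversal_compl_eq {f : Ω → Ω} {T T' : Set Ω}
    (hT : IsTransversal f T) (hT' : IsTransversal f T') :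
    #(Tᶜ : Set Ω) = #(T'ᶜ : Set Ω) :=
  le_antisymm (transversal_compl_le hT hT') (transversal_compl_le hT' hT)

theorem collapse_eq {f : Ω → Ω} {T : Set Ω} (hT : IsTransversal f T) :
    collapse f = #(Tᶜ : Set Ω) := by
  apply le_antisymm (ciInf_le' _ (⟨T, hT⟩ : {T : Set Ω // IsTransversal f T}))
  have : Nonempty {T : Set Ω // IsTransversal f T} := ⟨⟨T, hT⟩⟩
  exact le_ciInf fun T' => le_of_eq (transversal_compl_eq hT T'.2)

theorem collapse_le_of_transversal {f : Ω → Ω} {T : Set Ω} (hT : IsTransversal f T) :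
    collapse f ≤ #(Tᶜ : Set Ω) := le_of_eq (collapse_eq hT)

/-- equal partitions give the same transversals -/
theorem isTransversal_congr {f g : Ω → Ω} (hpart : ∀ x y, f x = f y ↔ g x = g y)
    {T : Set Ω} (hT : IsTransversal f T) : IsTransversal g T := by
  constructor
  · intro x hx y hy hxy
    exact hT.1 hx hy ((hpart x y).2 hxy)
  · apply Set.eq_of_subset_of_subset (Set.image_subset_range _ _)
    rintro _ ⟨x, rfl⟩
    have : f x ∈ f '' T := by rw [hT.2]; exact ⟨x, rfl⟩
    obtain ⟨t, ht, he⟩ := this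
    exact ⟨t, ht, (hpart t x).1 he⟩

theorem collapse_congr {f g : Ω → Ω} (hpart : ∀ x y, f x = f y ↔ g x = g y) :
    collapse f = collapse g := by
  obtain ⟨T, hT⟩ := exists_transversal f
  rw [collapse_eq hT, collapse_eq (isTransversal_congr hpart hT)]

theorem contract_congr {f g : Ω → Ω} (hpart : ∀ x y, f x = f y ↔ g x = g y) :
    contract f = contract g := by
  have key : ∀ (f g : Ω → Ω), (∀ x y, f x = f y ↔ g x = g y) →
      contract f ≤ contract g := by
    intro f g hp
    have hne : ∀ z : Ω, (f ⁻¹' {z}).Infinite → (f ⁻¹' {z}).Nonempty :=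
      fun z h => h.nonempty
    refine Cardinal.mk_le_of_injective (f := fun z : {α : Ω | (f ⁻¹' {α}).Infinite} =>
      (⟨g (hne z.1 z.2).choose, ?_⟩ : {α : Ω | (g ⁻¹' {α}).Infinite})) ?_
    · have hx : f (hne z.1 z.2).choose = z.1 := (hne z.1 z.2).choose_spec
      have : g ⁻¹' {g (hne z.1 z.2).choose} = f ⁻¹' {z.1} := by
        ext w
        simp only [Set.mem_preimage, Set.mem_singleton_iff]
        rw [← hp, hx]
      show (g ⁻¹' {g (hne z.1 z.2).choose}).Infinite
      rw [this]; exact z.2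
    · rintro ⟨z1, h1⟩ ⟨z2, h2⟩ h12
      simp only [Subtype.mk.injEq] at h12
      apply Subtype.ext
      have e1 : f (hne z1 h1).choose = z1 := (hne z1 h1).choose_spec
      have e2 : f (hne z2 h2).choose = z2 := (hne z2 h2).choose_spec
      show z1 = z2
      rw [← e1, ← e2]
      exact (hp _ _).2 h12
  exact le_antisymm (key f g hpart) (key g f (fun x y => (hpart x y).symm))

theorem collapse_eq_zero_iff {f : Ω → Ω} : collapse f = 0 ↔ Function.Injective f := by
  constructor
  · intro h x y hxy
    obtain ⟨T, hT⟩ := exists_transversal f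
    rw [collapse_eq hT] at h
    have : (Tᶜ : Set Ω) = ∅ := by
      rwa [Cardinal.mk_emptyCollection_iff] at h
    have hTuniv : T = Set.univ := Set.compl_empty_iff.1 this
    exact hT.1 (hTuniv ▸ Set.mem_univ x) (hTuniv ▸ Set.mem_univ y) hxy
  · intro hinj
    have hT : IsTransversal f Set.univ := by
      constructor
      · exact fun x _ y _ h => hinj h
      · rw [Set.image_univ]
    rw [collapse_eq hT, Set.compl_univ, Cardinal.mk_emptyCollection]

theorem collapse_pos_of_eq {f : Ω → Ω} {x y : Ω} (hxy : f x = f y) (hne : x ≠ y) :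
    0 < collapse f := by
  rcases pos_iff_ne_zero.2 (fun h => hne ((collapse_eq_zero_iff.1 h) hxy)) with h
  exact h

theorem defect_eq_zero_iff {f : Ω → Ω} : defect f = 0 ↔ Function.Surjective f := by
  unfold defect
  rw [Cardinal.mk_emptyCollection_iff, Set.compl_empty_iff, Set.range_eq_univ]

theorem aleph0_le_collapse_of_infinite_fiber {f : Ω → Ω} {z : Ω}
    (h : (f ⁻¹' {z}).Infinite) : ℵ₀ ≤ collapse f := by
  obtain ⟨T, hT⟩ := exists_transversal f
  rw [collapse_eq hT]
  rw [Cardinal.aleph0_le_mk_iff, Set.infinite_coe_iff]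
  have hsub : (f ⁻¹' {z}) ∩ T ⊆ {rep f T (h.nonempty.choose)} := by
    intro w ⟨hw1, hw2⟩
    have hw : f w = z := hw1
    have hc : f h.nonempty.choose = z := h.nonempty.choose_spec
    have := rep_total hT w
    have hrw : rep f T w = w := rep_mem_self hT hw2
    have : rep f T h.nonempty.choose = rep f T w := rep_eq f T (by rw [hc, hw])
    simp [this, hrw]
  have : (f ⁻¹' {z} ∩ Tᶜ).Infinite := by
    have : f ⁻¹' {z} ⊆ (f ⁻¹' {z} ∩ T) ∪ (f ⁻¹' {z} ∩ Tᶜ) := by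
      intro w hw
      by_cases hwT : w ∈ T
      · exact Or.inl ⟨hw, hwT⟩
      · exact Or.inr ⟨hw, hwT⟩
    have hfin : (f ⁻¹' {z} ∩ T).Finite := (Set.finite_singleton _).subset hsub
    by_contra hcon
    rw [Set.not_infinite] at hcon
    exact h (((hfin.union hcon).subset this))
  exact this.mono Set.inter_subset_right

theorem contract_eq_zero_of_fibers_finite {f : Ω → Ω}
    (h : ∀ z : Ω, ¬ (f ⁻¹' {z}).Infinite) : contract f = 0 := by
  unfold contract
  rw [Cardinal.mk_emptyCollection_iff]
  ext z; simp [h z]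

theorem contract_eq_zero_of_collapse_lt {f : Ω → Ω} (h : collapse f < ℵ₀) :
    contract f = 0 := by
  apply contract_eq_zero_of_fibers_finite
  intro z hz
  exact absurd h (not_lt.2 (aleph0_le_collapse_of_infinite_fiber hz))

/-- infinitely many disjoint collapsing pairs force infinite collapse -/
theorem aleph0_le_collapse_of_pairs {f : Ω → Ω} (p q : ℕ → Ω)
    (hfe : ∀ i, f (p i) = f (q i)) (hne : ∀ i, p i ≠ q i)
    (hdisj : ∀ i j, i ≠ j → f (p i) ≠ f (p j)) : ℵ₀ ≤ collapse f := by
  classical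
  obtain ⟨T, hT⟩ := exists_transversal f
  rw [collapse_eq hT, Cardinal.aleph0_le_mk_iff]
  have key : ∀ i : ℕ, (if p i ∈ T then q i else p i) ∈ Tᶜ := by
    intro i
    by_cases h : p i ∈ T
    · rw [if_pos h]
      intro hq
      exact hne i (hT.1 h hq (hfe i))
    · rw [if_neg h]; exact h
  refine Infinite.of_injective (fun i => (⟨_, key i⟩ : ↥(Tᶜ))) ?_
  intro i j hij
  by_contra hne'
  simp only [Subtype.mk.injEq] at hij
  apply hdisj i j hne'
  by_cases hi : p i ∈ T <;> by_cases hj : p j ∈ T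
  · rw [if_pos hi, if_pos hj] at hij
    rw [hfe i, hfe j, hij]
  · rw [if_pos hi, if_neg hj] at hij
    rw [hfe i, hij]
  · rw [if_neg hi, if_pos hj] at hij
    rw [hij, ← hfe j]
  · rw [if_neg hi, if_neg hj] at hij
    rw [hij]

section Comp
variable {f g : Ω → Ω}

theorem defect_comp_left_le : defect f ≤ defect (f ∘ g) :=
  Cardinal.mk_le_mk_of_subset (Set.compl_subset_compl.2 (Set.range_comp_subset_range g f))

theorem defect_comp_le : defect (f ∘ g) ≤ defect f + defect g := by
  have hsub : (Set.range (f ∘ g))ᶜ ⊆ (Set.range f)ᶜ ∪ f '' ((Set.range g)ᶜ) := by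
    intro y hy
    by_cases hyf : y ∈ Set.range f
    · obtain ⟨x, rfl⟩ := hyf
      right
      refine ⟨x, fun hxg => ?_, rfl⟩
      obtain ⟨z, rfl⟩ := hxg
      exact hy ⟨z, rfl⟩
    · exact Or.inl hyf
  calc #((Set.range (f ∘ g))ᶜ : Set Ω) ≤ #(((Set.range f)ᶜ ∪ f '' ((Set.range g)ᶜ) : Set Ω)) :=
        Cardinal.mk_le_mk_of_subset hsub
    _ ≤ #((Set.range f)ᶜ : Set Ω) + #((f '' ((Set.range g)ᶜ) : Set Ω)) := Cardinal.mk_union_le _ _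
    _ ≤ defect f + defect g := add_le_add le_rfl Cardinal.mk_image_le

theorem defect_comp_inj (hf : Function.Injective f) :
    defect (f ∘ g) = defect f + defect g := by
  apply le_antisymm defect_comp_le
  rw [defect, defect, defect, Cardinal.add_def]
  refine Cardinal.mk_le_of_injective (f := fun s : ↥((Set.range f)ᶜ) ⊕ ↥((Set.range g)ᶜ) => ?_) ?_
  · refine Sum.rec (fun y => (⟨y.1, fun hc => y.2 (Set.range_comp_subset_range g f hc)⟩ :
      ↥((Set.range (f ∘ g))ᶜ)))
      (fun x => ⟨f x.1, fun hc => ?_⟩) s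
    obtain ⟨z, hz⟩ := hc
    exact x.2 ⟨z, hf hz⟩
  · rintro (⟨y1, h1⟩ | ⟨x1, h1⟩) (⟨y2, h2⟩ | ⟨x2, h2⟩) h <;>
      simp only [Subtype.mk.injEq] at h
    · exact congrArg Sum.inl (Subtype.ext h)
    · exact absurd ⟨x2, h.symm⟩ h1
    · exact absurd ⟨x1, h⟩ h2
    · exact congrArg Sum.inr (Subtype.ext (hf h))

theorem collapse_comp_right_le : collapse g ≤ collapse (f ∘ g) := by
  obtain ⟨T, hT⟩ := exists_transversal (f ∘ g)
  have hinj : Set.InjOn g T := by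
    intro x hx y hy hxy
    exact hT.1 hx hy (by simp only [Function.comp_apply, hxy])
  obtain ⟨T', hTT', hT'⟩ := extend_transversal hinj
  rw [collapse_eq hT', collapse_eq hT]
  exact Cardinal.mk_le_mk_of_subset (Set.compl_subset_compl.2 hTT')

theorem aleph0_le_collapse_comp (hf : ℵ₀ ≤ collapse f) (hg : defect g < ℵ₀) :
    ℵ₀ ≤ collapse (f ∘ g) := by
  obtain ⟨T, hT⟩ := exists_transversal (f ∘ g)
  have hinj : Set.InjOn f (g '' T) := by
    rintro _ ⟨x, hx, rfl⟩ _ ⟨y, hy, rfl⟩ hxy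
    rw [hT.1 hx hy hxy]
  obtain ⟨S', hSS', hS'⟩ := extend_transversal hinj
  have h1 : ℵ₀ ≤ #((g '' T)ᶜ : Set Ω) := by
    calc ℵ₀ ≤ #((S')ᶜ : Set Ω) := (collapse_eq hS') ▸ hf
      _ ≤ #((g '' T)ᶜ : Set Ω) :=
        Cardinal.mk_le_mk_of_subset (Set.compl_subset_compl.2 hSS')
  have hsub : (g '' T)ᶜ ⊆ (Set.range g)ᶜ ∪ g '' (Tᶜ) := by
    intro w hw
    by_cases hwg : w ∈ Set.range g
    · obtain ⟨x, rfl⟩ := hwg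
      right
      exact ⟨x, fun hx => hw ⟨x, hx, rfl⟩, rfl⟩
    · exact Or.inl hwg
  have h2 : ℵ₀ ≤ defect g + #(Tᶜ : Set Ω) := by
    calc ℵ₀ ≤ #((g '' T)ᶜ : Set Ω) := h1
      _ ≤ #(((Set.range g)ᶜ ∪ g '' (Tᶜ) : Set Ω)) := Cardinal.mk_le_mk_of_subset hsub
      _ ≤ defect g + #((g '' (Tᶜ) : Set Ω)) := Cardinal.mk_union_le _ _
      _ ≤ defect g + #(Tᶜ : Set Ω) := add_le_add le_rfl Cardinal.mk_image_le
  rw [collapse_eq hT]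
  by_contra hcon
  rw [not_le] at hcon
  exact absurd h2 (not_le.2 (Cardinal.add_lt_aleph0 hg hcon))

theorem collapse_comp_le : collapse (f ∘ g) ≤ collapse f + collapse g := by
  classical
  obtain ⟨Tf, hTf⟩ := exists_transversal f
  obtain ⟨Tg, hTg⟩ := exists_transversal g
  set B : Ω → Ω := fun γ =>
    if h : ∃ w, (w ∈ Tf ∧ f w = γ) ∧ w ∈ Set.range g then h.choose
    else if h2 : ∃ w, f w = γ ∧ w ∈ Set.range g then h2.choose else γ with hB
  have hBP1 : ∀ γ, (∃ w, f w = γ ∧ w ∈ Set.range g) → f (B γ) = γ ∧ B γ ∈ Set.range g := by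
    intro γ hγ
    by_cases h : ∃ w, (w ∈ Tf ∧ f w = γ) ∧ w ∈ Set.range g
    · simp only [hB, dif_pos h]
      exact ⟨h.choose_spec.1.2, h.choose_spec.2⟩
    · simp only [hB, dif_neg h, dif_pos hγ]
      exact hγ.choose_spec
  have hBP2 : ∀ γ, (∃ w, (w ∈ Tf ∧ f w = γ) ∧ w ∈ Set.range g) → B γ ∈ Tf := by
    intro γ h
    simp only [hB, dif_pos h]
    exact h.choose_spec.1.1
  set T : Set Ω := {x | x ∈ Tg ∧ g x = B (f (g x))} with hT
  have htrans : IsTransversal (f ∘ g) T := by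
    constructor
    · rintro x ⟨hx1, hx2⟩ y ⟨hy1, hy2⟩ hxy
      apply hTg.1 hx1 hy1
      rw [hx2, hy2]
      simp only [Function.comp_apply] at hxy
      rw [hxy]
    · apply Set.eq_of_subset_of_subset (Set.image_subset_range _ _)
      rintro _ ⟨z, rfl⟩
      have hex : ∃ w, f w = f (g z) ∧ w ∈ Set.range g := ⟨g z, rfl, ⟨z, rfl⟩⟩
      obtain ⟨hfB, hBrg⟩ := hBP1 _ hex
      obtain ⟨x₀, hx₀⟩ := hBrg
      have hrt := rep_total hTg x₀
      refine ⟨rep g Tg x₀, ⟨hrt.1, ?_⟩, ?_⟩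
      · show g (rep g Tg x₀) = B (f (g (rep g Tg x₀)))
        rw [hrt.2, hx₀, hfB]
      · simp only [Function.comp_apply]
        rw [hrt.2, hx₀, hfB]
  rw [collapse_eq htrans, collapse_eq hTf, collapse_eq hTg, Cardinal.add_def]
  have key : ∀ x : Ω, x ∈ Tᶜ → x ∈ Tg → g x ∈ Tfᶜ := by
    intro x hx hxg
    intro hgx
    apply hx
    have hex : ∃ w, (w ∈ Tf ∧ f w = f (g x)) ∧ w ∈ Set.range g := ⟨g x, ⟨hgx, rfl⟩, ⟨x, rfl⟩⟩
    have hBTf := hBP2 _ hex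
    have := hBP1 _ ⟨g x, rfl, ⟨x, rfl⟩⟩
    have heq : B (f (g x)) = g x := hTf.1 hBTf hgx this.1
    exact ⟨hxg, heq.symm⟩
  refine Cardinal.mk_le_of_injective (f := fun x : ↥(Tᶜ) =>
    if hxg : (x : Ω) ∈ Tg then Sum.inl (⟨g x, key x x.2 hxg⟩ : ↥(Tfᶜ))
    else Sum.inr (⟨x, hxg⟩ : ↥(Tgᶜ))) ?_
  rintro ⟨x, hx⟩ ⟨y, hy⟩ hxy
  dsimp only at hxy
  by_cases hxg : x ∈ Tg <;> by_cases hyg : y ∈ Tg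
  · rw [dif_pos hxg, dif_pos hyg] at hxy
    apply Subtype.ext
    simp only [Sum.inl.injEq, Subtype.mk.injEq] at hxy
    exact hTg.1 hxg hyg hxy
  · rw [dif_pos hxg, dif_neg hyg] at hxy
    exact absurd hxy (by simp)
  · rw [dif_neg hxg, dif_pos hyg] at hxy
    exact absurd hxy (by simp)
  · rw [dif_neg hxg, dif_neg hyg] at hxy
    apply Subtype.ext
    simp only [Sum.inr.injEq, Subtype.mk.injEq] at hxy
    exact hxy

theorem contract_comp_le : contract (f ∘ g) ≤ contract f + contract g := by
  have hsub : {α : Ω | ((f ∘ g) ⁻¹' {α}).Infinite} ⊆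
      {α : Ω | (f ⁻¹' {α}).Infinite} ∪ f '' {α : Ω | (g ⁻¹' {α}).Infinite} := by
    intro γ hγ
    by_cases hf : (f ⁻¹' {γ}).Infinite
    · exact Or.inl hf
    · right
      rw [Set.not_infinite] at hf
      by_contra hcon
      apply hγ
      have heq : (f ∘ g) ⁻¹' {γ} = ⋃ β ∈ f ⁻¹' {γ}, g ⁻¹' {β} := by
        ext z
        simp only [Set.mem_preimage, Function.comp_apply, Set.mem_singleton_iff,
          Set.mem_iUnion]
        constructor
        · intro h; exact ⟨g z, h, rfl⟩
        · rintro ⟨β, h1, h2⟩; rw [h2, h1]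
      rw [heq]
      apply Set.Finite.biUnion hf
      intro β hβ
      rw [← Set.not_infinite]
      intro hinf
      exact hcon ⟨β, hinf, hβ⟩
  calc contract (f ∘ g) ≤ #(({α : Ω | (f ⁻¹' {α}).Infinite} ∪
        f '' {α : Ω | (g ⁻¹' {α}).Infinite} : Set Ω)) := Cardinal.mk_le_mk_of_subset hsub
    _ ≤ contract f + #((f '' {α : Ω | (g ⁻¹' {α}).Infinite} : Set Ω)) := Cardinal.mk_union_le _ _
    _ ≤ contract f + contract g := add_le_add le_rfl Cardinal.mk_image_le

theorem defect_comp_surj (hg : Function.Surjective g) : defect (f ∘ g) = defect f := by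
  unfold defect
  rw [Set.range_comp, Function.Surjective.range_eq hg, Set.image_univ]

theorem collapse_comp_bij_right (hg : Function.Bijective g) :
    collapse (f ∘ g) = collapse f := by
  apply le_antisymm
  · obtain ⟨T', hT'⟩ := exists_transversal f
    have htrans : IsTransversal (f ∘ g) (g ⁻¹' T') := by
      constructor
      · intro x hx y hy hxy
        exact hg.1 (hT'.1 hx hy hxy)
      · apply Set.eq_of_subset_of_subset (Set.image_subset_range _ _)
        rintro _ ⟨z, rfl⟩
        have : f (g z) ∈ f '' T' := by rw [hT'.2]; exact ⟨g z, rfl⟩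
        obtain ⟨t, ht, he⟩ := this
        obtain ⟨u, rfl⟩ := hg.2 t
        exact ⟨u, ht, he⟩
    rw [collapse_eq htrans, collapse_eq hT']
    rw [← Set.preimage_compl]
    exact Cardinal.mk_preimage_of_injective g _ hg.1
  · obtain ⟨T, hT⟩ := exists_transversal (f ∘ g)
    have htrans : IsTransversal f (g '' T) := by
      constructor
      · rintro _ ⟨x, hx, rfl⟩ _ ⟨y, hy, rfl⟩ hxy
        rw [hT.1 hx hy hxy]
      · apply Set.eq_of_subset_of_subset (Set.image_subset_range _ _)
        rintro _ ⟨z, rfl⟩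
        obtain ⟨u, rfl⟩ := hg.2 z
        have : f (g u) ∈ (f ∘ g) '' T := by rw [hT.2]; exact ⟨u, rfl⟩
        obtain ⟨t, ht, he⟩ := this
        exact ⟨g t, ⟨t, ht, rfl⟩, he⟩
    rw [collapse_eq htrans, collapse_eq hT]
    rw [← Set.image_compl_eq hg]
    exact le_of_eq (Cardinal.mk_image_eq hg.1)

theorem collapse_comp_bij_left (hf : Function.Bijective f) :
    collapse (f ∘ g) = collapse g :=
  collapse_congr fun x y => by
    simp only [Function.comp_apply]
    exact ⟨fun h => hf.1 h, fun h => by rw [h]⟩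

theorem defect_comp_bij_left (hf : Function.Bijective f) : defect (f ∘ g) = defect g := by
  unfold defect
  rw [Set.range_comp, ← Set.image_compl_eq hf]
  exact Cardinal.mk_image_eq hf.1

end Comp

section CountableInfinite
variable [Countable Ω] [Infinite Ω]
set_option linter.unusedSectionVars false

theorem mk_set_le_aleph0 (s : Set Ω) : #s ≤ ℵ₀ := Cardinal.mk_le_aleph0

theorem aleph0_le_mk_set_iff {s : Set Ω} : ℵ₀ ≤ #s ↔ s.Infinite := by
  rw [Cardinal.aleph0_le_mk_iff, Set.infinite_coe_iff]

theorem mk_set_lt_aleph0_iff {s : Set Ω} : #s < ℵ₀ ↔ s.Finite :=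
  Cardinal.lt_aleph0_iff_set_finite

theorem equivOfInfinite {S R : Set Ω} (hS : S.Infinite) (hR : R.Infinite) :
    Nonempty (↥S ≃ ↥R) := by
  haveI := hS.to_subtype
  haveI := hR.to_subtype
  obtain ⟨dS⟩ := nonempty_denumerable ↥S
  obtain ⟨dR⟩ := nonempty_denumerable ↥R
  exact ⟨(Denumerable.eqv _).trans (Denumerable.eqv _).symm⟩

/-- The basic "β-extension" gadget: a map whose range is `R`, with transversal `S`,
sending everything outside `S` to a single point. -/
theorem gadget {S R : Set Ω} (hS : S.Infinite) (hR : R.Infinite) :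
    ∃ u : Ω → Ω, Set.range u = R ∧ IsTransversal u S ∧ contract u ≤ 1 := by
  classical
  obtain ⟨β⟩ := equivOfInfinite hS hR
  obtain ⟨s₀, hs₀⟩ := hS.nonempty
  refine ⟨fun z => if h : z ∈ S then (β ⟨z, h⟩ : Ω) else (β ⟨s₀, hs₀⟩ : Ω), ?_, ?_, ?_⟩
  case _ =>
    apply Set.eq_of_subset_of_subset
    · rintro _ ⟨z, rfl⟩
      dsimp only
      by_cases h : z ∈ S
      · rw [dif_pos h]; exact (β ⟨z, h⟩).2
      · rw [dif_neg h]; exact (β ⟨s₀, hs₀⟩).2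
    · intro r hr
      refine ⟨(β.symm ⟨r, hr⟩ : Ω), ?_⟩
      dsimp only
      rw [dif_pos (β.symm ⟨r, hr⟩).2]
      show ((β ⟨((β.symm ⟨r, hr⟩) : Ω), _⟩ : ↥R) : Ω) = r
      rw [Subtype.eta, Equiv.apply_symm_apply]
  case _ =>
    constructor
    · intro z1 h1 z2 h2 h12
      dsimp only at h12
      rw [dif_pos h1, dif_pos h2] at h12
      have := β.injective (Subtype.coe_injective h12)
      injection this
    · apply Set.eq_of_subset_of_subset (Set.image_subset_range _ _)
      rintro _ ⟨z, rfl⟩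
      by_cases h : z ∈ S
      · exact ⟨z, h, rfl⟩
      · refine ⟨s₀, hs₀, ?_⟩
        dsimp only
        rw [dif_pos hs₀, dif_neg h]
  case _ =>
    have hsub : {α : Ω | ((fun z => if h : z ∈ S then (β ⟨z, h⟩ : Ω)
        else (β ⟨s₀, hs₀⟩ : Ω)) ⁻¹' {α}).Infinite} ⊆ {(β ⟨s₀, hs₀⟩ : Ω)} := by
      intro z hz
      simp only [Set.mem_setOf_eq] at hz
      by_contra hne
      apply hz
      have : (fun w => if h : w ∈ S then (β ⟨w, h⟩ : Ω) else (β ⟨s₀, hs₀⟩ : Ω)) ⁻¹' {z} ⊆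
          {w | ∃ h : w ∈ S, (β ⟨w, h⟩ : Ω) = z} := by
        intro w hw
        simp only [Set.mem_preimage, Set.mem_singleton_iff] at hw
        by_cases h : w ∈ S
        · rw [dif_pos h] at hw; exact ⟨h, hw⟩
        · rw [dif_neg h] at hw; exact absurd hw.symm hne
      apply Set.Finite.subset _ this
      apply Set.Subsingleton.finite
      rintro w1 ⟨h1, e1⟩ w2 ⟨h2, e2⟩
      have := β.injective (Subtype.coe_injective (e1.trans e2.symm))
      injection this
    calc contract _ ≤ #({(β ⟨s₀, hs₀⟩ : Ω)} : Set Ω) := Cardinal.mk_le_mk_of_subset hsub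
      _ = 1 := Cardinal.mk_singleton _

/-- The "reshaping" gadget: a map with the same partition as `t'` and range `E`. -/
theorem gadget2 {t' : Ω → Ω} {E : Set Ω} (ht' : (Set.range t').Infinite) (hE : E.Infinite) :
    ∃ v : Ω → Ω, (∀ x y, v x = v y ↔ t' x = t' y) ∧ Set.range v = E := by
  obtain ⟨θ⟩ := equivOfInfinite ht' hE
  refine ⟨fun x => (θ ⟨t' x, ⟨x, rfl⟩⟩ : Ω), fun x y => ?_, ?_⟩
  · constructor
    · intro h
      have := θ.injective (Subtype.coe_injective h)
      injection this
    · intro h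
      dsimp only
      have : (⟨t' x, ⟨x, rfl⟩⟩ : ↥(Set.range t')) = ⟨t' y, ⟨y, rfl⟩⟩ := Subtype.ext h
      rw [this]
  · apply Set.eq_of_subset_of_subset
    · rintro _ ⟨x, rfl⟩; exact (θ ⟨t' x, ⟨x, rfl⟩⟩).2
    · intro s hs
      obtain ⟨z, hz⟩ : ∃ z, θ.symm ⟨s, hs⟩ = z := ⟨_, rfl⟩
      obtain ⟨x, hx⟩ := z.2
      refine ⟨x, ?_⟩
      dsimp only
      have : (⟨t' x, ⟨x, rfl⟩⟩ : ↥(Set.range t')) = z := Subtype.ext hx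
      rw [this, ← hz, Equiv.apply_symm_apply]

/-- Realization: same partition and same range force equality up to a bijection. -/
theorem realize {f g : Ω → Ω} (hpart : ∀ x y, f x = f y ↔ g x = g y)
    (hrange : Set.range f = Set.range g) :
    ∃ u : Ω → Ω, Function.Bijective u ∧ g = u ∘ f := by
  classical
  set u : Ω → Ω := fun x => if h : x ∈ Set.range f then g h.choose else x with hu
  have hval : ∀ x : Ω, u (f x) = g x := by
    intro x
    have h : f x ∈ Set.range f := ⟨x, rfl⟩
    show (if h : f x ∈ Set.range f then g h.choose else f x) = g x
    rw [dif_pos h]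
    exact (hpart _ _).1 h.choose_spec
  have hinj : Function.Injective u := by
    intro x1 x2 h12
    by_cases h1 : x1 ∈ Set.range f <;> by_cases h2 : x2 ∈ Set.range f
    · simp only [hu, dif_pos h1, dif_pos h2] at h12
      have := (hpart _ _).2 h12
      rw [h1.choose_spec, h2.choose_spec] at this
      exact this
    · simp only [hu, dif_pos h1, dif_neg h2] at h12
      exfalso; apply h2
      rw [← h12, hrange]
      exact ⟨h1.choose, rfl⟩
    · simp only [hu, dif_neg h1, dif_pos h2] at h12
      exfalso; apply h1
      rw [h12, hrange]
      exact ⟨h2.choose, rfl⟩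
    · simpa only [hu, dif_neg h1, dif_neg h2] using h12
  have hsurj : Function.Surjective u := by
    intro z
    by_cases hz : z ∈ Set.range g
    · obtain ⟨x, rfl⟩ := hz
      exact ⟨f x, hval x⟩
    · refine ⟨z, ?_⟩
      have : z ∉ Set.range f := fun h => hz (hrange ▸ h)
      simp only [hu, dif_neg this]
  exact ⟨u, ⟨hinj, hsurj⟩, funext fun x => (hval x).symm⟩

end CountableInfinite

section Membership
set_option linter.unusedSectionVars false

theorem collapse_eq_zero_of_injective {f : Ω → Ω} (h : Function.Injective f) :
    collapse f = 0 := collapse_eq_zero_iff.2 h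

theorem mem_S12345_sym {u : Function.End Ω} (hu : Function.Bijective u) :
    u ∈ (S12345 : Set (Function.End Ω)) := by
  have hc : collapse u = 0 := collapse_eq_zero_of_injective hu.1
  have hd : defect u = 0 := defect_eq_zero_iff.2 hu.2
  refine ⟨⟨⟨⟨Or.inl hc, Or.inr hd⟩, Or.inl ?_⟩, Or.inr ?_⟩, ?_⟩
  · rw [hc]; exact aleph0_pos
  · rw [hd]; exact aleph0_pos
  · show contract u < ℵ₀
    rw [show contract u = 0 from contract_eq_zero_of_collapse_lt (by rw [hc]; exact aleph0_pos)]
    exact aleph0_pos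

theorem mem_S12345_W {w : Function.End Ω} (hc0 : 0 < collapse w) (hcF : collapse w < ℵ₀)
    (hd0 : 0 < defect w) (hdF : defect w < ℵ₀) :
    w ∈ (S12345 : Set (Function.End Ω)) := by
  refine ⟨⟨⟨⟨Or.inr hd0, Or.inl hc0⟩, Or.inl hcF⟩, Or.inr hdF⟩, ?_⟩
  show contract w < ℵ₀
  rw [contract_eq_zero_of_collapse_lt hcF]
  exact aleph0_pos

theorem mem_S12345_K {w : Function.End Ω} (hc : ℵ₀ ≤ collapse w) (hd : ℵ₀ ≤ defect w)
    (hk : contract w < ℵ₀) :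
    w ∈ (S12345 : Set (Function.End Ω)) := by
  refine ⟨⟨⟨⟨Or.inr (lt_of_lt_of_le aleph0_pos hd), Or.inl (lt_of_lt_of_le aleph0_pos hc)⟩,
    Or.inr hd⟩, Or.inl hc⟩, hk⟩

end Membership

section Claims
variable [Countable Ω] [Infinite Ω]
set_option linter.unusedSectionVars false

theorem range_infinite_of_defect_lt {f : Ω → Ω} (h : defect f < ℵ₀) :
    (Set.range f).Infinite := by
  have : ((Set.range f)ᶜ).Finite := mk_set_lt_aleph0_iff.1 h
  have := this.infinite_compl
  rwa [compl_compl] at this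

theorem transversal_infinite {f : Ω → Ω} {T : Set Ω} (hT : IsTransversal f T)
    (h : (Set.range f).Infinite) : T.Infinite := by
  intro hfin
  exact h (hT.2 ▸ hfin.image f)

def toEnd (f : Ω → Ω) : Function.End Ω := f

theorem toEnd_mul (f : Ω → Ω) (g : Function.End Ω) : ((toEnd f * g : Function.End Ω) : Ω → Ω) = f ∘ g := rfl

/-- Claim A: from `S12345` and one element of class A we get all of class A. -/
theorem claimA {T : Set (Function.End Ω)} (hT : ∀ a ∈ T, ∀ b ∈ T, a * b ∈ T)
    (hS : S12345 ⊆ T) {a : Function.End Ω} (ha : a ∈ T) (hai : Function.Injective a)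
    (had : defect a < ℵ₀) (had0 : 0 < defect a) :
    ∀ t' : Function.End Ω, Function.Injective t' → 0 < defect t' → defect t' < ℵ₀ → t' ∈ T := by
  intro t' ht'i ht'd0 ht'd
  have hSinf : (Set.range a).Infinite := Set.infinite_range_of_injective hai
  have hRinf : (Set.range t').Infinite := Set.infinite_range_of_injective ht'i
  obtain ⟨w, hwr, hwt, hwk⟩ := gadget hSinf hRinf
  have hwc : collapse w = defect a := collapse_eq hwt
  have hwd : defect w = defect t' := by unfold defect; rw [hwr]
  have hwmem : w ∈ (S12345 : Set (Function.End Ω)) :=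
    mem_S12345_W (by rw [hwc]; exact had0) (by rw [hwc]; exact had)
      (by rw [hwd]; exact ht'd0) (by rw [hwd]; exact ht'd)
  have htm : (toEnd w * a : Function.End Ω) ∈ T := hT (toEnd w) (hS hwmem) a ha
  have hti : Function.Injective (w ∘ a) := by
    intro x y hxy
    apply hai
    apply hwt.1 (Set.mem_range_self x) (Set.mem_range_self y) hxy
  have htr : Set.range (w ∘ a) = Set.range t' := by
    rw [show Set.range (w ∘ a) = w '' Set.range a from Set.range_comp _ _, hwt.2, hwr]
  have hpart : ∀ x y : Ω, (w ∘ a) x = (w ∘ a) y ↔ t' x = t' y := by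
    intro x y
    constructor
    · intro h; rw [hti h]
    · intro h; rw [ht'i h]
  obtain ⟨u, hub, hueq⟩ := realize hpart htr
  have : t' = toEnd u * (toEnd w * a) := by
    funext x
    rw [hueq]; rfl
  rw [this]
  exact hT (toEnd u) (hS (mem_S12345_sym hub)) _ htm

/-- Claim B: from `S12345` and one element of class B we get all of class B. -/
theorem claimB {T : Set (Function.End Ω)} (hT : ∀ a ∈ T, ∀ b ∈ T, a * b ∈ T)
    (hS : S12345 ⊆ T) {b : Function.End Ω} (hb : b ∈ T) (hbs : Function.Surjective b)
    (hbc0 : 0 < collapse b) (hbcF : collapse b < ℵ₀) :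
    ∀ t' : Function.End Ω, Function.Surjective t' → 0 < collapse t' → collapse t' < ℵ₀ →
      t' ∈ T := by
  intro t' ht's ht'c0 ht'c
  obtain ⟨Tb, hTb⟩ := exists_transversal (b : Ω → Ω)
  have hrb : Set.range (b : Ω → Ω) = Set.univ := Set.range_eq_univ.2 hbs
  have hTbinf : Tb.Infinite := transversal_infinite hTb (by rw [hrb]; exact Set.infinite_univ)
  have hrt' : Set.range (t' : Ω → Ω) = Set.univ := Set.range_eq_univ.2 ht's
  have hrt'inf : (Set.range (t' : Ω → Ω)).Infinite := by rw [hrt']; exact Set.infinite_univ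
  obtain ⟨v, hvpart, hvr⟩ := gadget2 hrt'inf hTbinf
  have hvc : collapse v = collapse t' := collapse_congr hvpart
  have hvd : defect v = collapse b := by
    unfold defect; rw [hvr, ← collapse_eq hTb]
  have hvk : contract v = 0 := by
    rw [contract_congr hvpart]
    exact contract_eq_zero_of_collapse_lt ht'c
  have hvmem : toEnd v ∈ (S12345 : Set (Function.End Ω)) :=
    mem_S12345_W (by rw [show collapse (toEnd v) = collapse v from rfl, hvc]; exact ht'c0)
      (by rw [show collapse (toEnd v) = collapse v from rfl, hvc]; exact ht'c)
      (by rw [show defect (toEnd v) = defect v from rfl, hvd]; exact hbc0)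
      (by rw [show defect (toEnd v) = defect v from rfl, hvd]; exact hbcF)
  have ht0 : (b * toEnd v : Function.End Ω) ∈ T := hT b hb (toEnd v) (hS hvmem)
  have hvTb : ∀ z : Ω, v z ∈ Tb := fun z => hvr ▸ Set.mem_range_self z
  have hpart : ∀ z w : Ω, (b ∘ v) z = (b ∘ v) w ↔ t' z = t' w := by
    intro z w
    constructor
    · intro h
      exact (hvpart z w).1 (hTb.1 (hvTb z) (hvTb w) h)
    · intro h
      show b (v z) = b (v w)
      rw [(hvpart z w).2 h]
  have hrange : Set.range (b ∘ v) = Set.range (t' : Ω → Ω) := by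
    rw [show Set.range (b ∘ v) = b '' Set.range v from Set.range_comp _ _, hvr, hTb.2, hrb, hrt']
  obtain ⟨u, hub, hueq⟩ := realize hpart hrange
  have : t' = toEnd u * (b * toEnd v) := by
    funext z
    rw [hueq]; rfl
  rw [this]
  exact hT (toEnd u) (hS (mem_S12345_sym hub)) _ ht0

/-- Claim CD: from `S12345`, classes A and B, and one element with infinite collapse and
finite defect, we get every element with infinite collapse, finite defect and finite
contraction index. -/
theorem claimCD {T : Set (Function.End Ω)} (hT : ∀ a ∈ T, ∀ b ∈ T, a * b ∈ T)
    (hS : S12345 ⊆ T)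
    (hA : ∀ u : Function.End Ω, Function.Injective u → 0 < defect u → defect u < ℵ₀ → u ∈ T)
    (hB : ∀ u : Function.End Ω, Function.Surjective u → 0 < collapse u → collapse u < ℵ₀ → u ∈ T)
    {x : Function.End Ω} (hx : x ∈ T) (hxc : ℵ₀ ≤ collapse x) (hxd : defect x < ℵ₀) :
    ∀ t' : Function.End Ω, ℵ₀ ≤ collapse t' → defect t' < ℵ₀ → contract t' < ℵ₀ → t' ∈ T := by
  intro t' ht'c ht'd ht'k
  obtain ⟨Tx, hTx⟩ := exists_transversal (x : Ω → Ω)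
  have hrngx : (Set.range (x : Ω → Ω)).Infinite := range_infinite_of_defect_lt hxd
  have hTxinf : Tx.Infinite := transversal_infinite hTx hrngx
  have hrt'inf : (Set.range (t' : Ω → Ω)).Infinite := range_infinite_of_defect_lt ht'd
  obtain ⟨v, hvpart, hvr⟩ := gadget2 hrt'inf hTxinf
  have hvc : collapse v = collapse t' := collapse_congr hvpart
  have hvd : defect v = collapse x := by
    unfold defect; rw [hvr, ← collapse_eq hTx]
  have hvk : contract v = contract t' := contract_congr hvpart
  have hvmem : toEnd v ∈ (S12345 : Set (Function.End Ω)) := by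
    apply mem_S12345_K
    · rw [show collapse (toEnd v) = collapse v from rfl, hvc]; exact ht'c
    · rw [show defect (toEnd v) = defect v from rfl, hvd]; exact hxc
    · rw [show contract (toEnd v) = contract v from rfl, hvk]; exact ht'k
  have ht0 : (x * toEnd v : Function.End Ω) ∈ T := hT x hx (toEnd v) (hS hvmem)
  have hvTx : ∀ z : Ω, v z ∈ Tx := fun z => hvr ▸ Set.mem_range_self z
  have hpart0 : ∀ z w : Ω, (x ∘ v) z = (x ∘ v) w ↔ t' z = t' w := by
    intro z w
    constructor
    · intro h
      exact (hvpart z w).1 (hTx.1 (hvTx z) (hvTx w) h)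
    · intro h
      show x (v z) = x (v w)
      rw [(hvpart z w).2 h]
  have hrange0 : Set.range (x ∘ v) = Set.range (x : Ω → Ω) := by
    rw [show Set.range (x ∘ v) = x '' Set.range v from Set.range_comp _ _, hvr, hTx.2]
  -- the defect-fixing gadget
  obtain ⟨u, hur, hut, huk⟩ := gadget hrngx hrt'inf
  have huc : collapse u = defect x := collapse_eq hut
  have hud : defect u = defect t' := by unfold defect; rw [hur]
  have humem : toEnd u ∈ T := by
    by_cases hn : defect x = 0
    · have huinj : Function.Injective u := by
        apply collapse_eq_zero_iff.1
        rw [huc, hn]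
      by_cases hm : defect t' = 0
      · apply hS
        apply mem_S12345_sym
        refine ⟨huinj, ?_⟩
        apply defect_eq_zero_iff.1
        rw [show defect (toEnd u) = defect u from rfl, hud, hm]
      · exact hA (toEnd u) huinj
          (by rw [show defect (toEnd u) = defect u from rfl, hud]
              exact pos_iff_ne_zero.2 hm)
          (by rw [show defect (toEnd u) = defect u from rfl, hud]; exact ht'd)
    · by_cases hm : defect t' = 0
      · apply hB (toEnd u) ?_ ?_ ?_
        · apply defect_eq_zero_iff.1
          rw [show defect (toEnd u) = defect u from rfl, hud, hm]
        · rw [show collapse (toEnd u) = collapse u from rfl, huc]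
          exact pos_iff_ne_zero.2 hn
        · rw [show collapse (toEnd u) = collapse u from rfl, huc]; exact hxd
      · apply hS
        apply mem_S12345_W
        · rw [show collapse (toEnd u) = collapse u from rfl, huc]
          exact pos_iff_ne_zero.2 hn
        · rw [show collapse (toEnd u) = collapse u from rfl, huc]; exact hxd
        · rw [show defect (toEnd u) = defect u from rfl, hud]
          exact pos_iff_ne_zero.2 hm
        · rw [show defect (toEnd u) = defect u from rfl, hud]; exact ht'd
  have ht1 : (toEnd u * (x * toEnd v) : Function.End Ω) ∈ T := hT (toEnd u) humem _ ht0
  have hvalmem : ∀ z : Ω, (x ∘ v) z ∈ Set.range (x : Ω → Ω) := by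
    intro z
    rw [← hrange0]
    exact Set.mem_range_self z
  have hpart1 : ∀ z w : Ω, (u ∘ (x ∘ v)) z = (u ∘ (x ∘ v)) w ↔ t' z = t' w := by
    intro z w
    constructor
    · intro h
      exact (hpart0 z w).1 (hut.1 (hvalmem z) (hvalmem w) h)
    · intro h
      show u ((x ∘ v) z) = u ((x ∘ v) w)
      rw [(hpart0 z w).2 h]
  have hrange1 : Set.range (u ∘ (x ∘ v)) = Set.range (t' : Ω → Ω) := by
    rw [Set.range_comp, hrange0, hut.2, hur]
  obtain ⟨σ, hσb, hσeq⟩ := realize hpart1 hrange1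
  have : t' = toEnd σ * (toEnd u * (x * toEnd v)) := by
    funext z
    rw [hσeq]; rfl
  rw [this]
  exact hT (toEnd σ) (hS (mem_S12345_sym hσb)) _ ht1

/-- Claim Kinf: from `S12345`, the finite-contraction part of classes C/D, and one element
with infinite contraction index, we get every element with infinite contraction index. -/
theorem claimKinf {T : Set (Function.End Ω)} (hT : ∀ a ∈ T, ∀ b ∈ T, a * b ∈ T)
    (hS : S12345 ⊆ T)
    (hCD : ∀ u : Function.End Ω, ℵ₀ ≤ collapse u → defect u < ℵ₀ → contract u < ℵ₀ → u ∈ T)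
    {y : Function.End Ω} (hy : y ∈ T) (hyk : ℵ₀ ≤ contract y) :
    ∀ t' : Function.End Ω, ℵ₀ ≤ contract t' → t' ∈ T := by
  classical
  intro t' ht'k
  -- enumerate the infinite fibers of y
  haveI hKy : Infinite ↥{α : Ω | ((y : Ω → Ω) ⁻¹' {α}).Infinite} :=
    Cardinal.aleph0_le_mk_iff.1 hyk
  obtain ⟨dKy⟩ := nonempty_denumerable ↥{α : Ω | ((y : Ω → Ω) ⁻¹' {α}).Infinite}
  set φ : ℕ ≃ ↥{α : Ω | ((y : Ω → Ω) ⁻¹' {α}).Infinite} := (Denumerable.eqv _).symm with hφ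
  set F : ℕ → Set Ω := fun i => (y : Ω → Ω) ⁻¹' {(φ i : Ω)} with hF
  have hFinf : ∀ i, (F i).Infinite := fun i => (φ i).2
  have hFdisj : ∀ {i j : ℕ} {w : Ω}, w ∈ F i → w ∈ F j → i = j := by
    intro i j w hi hj
    have h1 : y w = (φ i : Ω) := hi
    have h2 : y w = (φ j : Ω) := hj
    exact φ.injective (Subtype.coe_injective (h1.symm.trans h2))
  -- range of t' is infinite
  have hKtsub : {α : Ω | ((t' : Ω → Ω) ⁻¹' {α}).Infinite} ⊆ Set.range (t' : Ω → Ω) := by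
    intro α hα
    obtain ⟨z, hz⟩ := hα.nonempty
    exact ⟨z, hz⟩
  haveI hKt : Infinite ↥{α : Ω | ((t' : Ω → Ω) ⁻¹' {α}).Infinite} :=
    Cardinal.aleph0_le_mk_iff.1 ht'k
  have hrng : (Set.range (t' : Ω → Ω)).Infinite :=
    (Set.infinite_coe_iff.1 hKt).mono hKtsub
  haveI := hrng.to_subtype
  obtain ⟨dRng⟩ := nonempty_denumerable ↥(Set.range (t' : Ω → Ω))
  set ψ : ↥(Set.range (t' : Ω → Ω)) ≃ ℕ := Denumerable.eqv _ with hψ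
  set idx : Ω → ℕ := fun z => 2 * ψ ⟨t' z, Set.mem_range_self z⟩ with hidx
  have hidx_congr : ∀ {z w : Ω}, t' z = t' w → idx z = idx w := by
    intro z w h
    simp only [hidx]
    congr 1
    exact congrArg ψ (Subtype.ext h)
  have hidx_inj : ∀ {z w : Ω}, idx z = idx w → t' z = t' w := by
    intro z w h
    simp only [hidx] at h
    have := ψ.injective (by omega : ψ ⟨t' z, Set.mem_range_self z⟩ = ψ ⟨t' w, Set.mem_range_self w⟩)
    exact congrArg Subtype.val this
  -- choose enumerations of the fibers F i
  have hεex : ∀ i : ℕ, ∃ e : ℕ → Ω, Function.Injective e ∧ ∀ n, e n ∈ F i := by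
    intro i
    haveI := (hFinf i).to_subtype
    refine ⟨fun n => (Infinite.natEmbedding ↥(F i) n : Ω), ?_, fun n => (Infinite.natEmbedding ↥(F i) n).2⟩
    intro n m h
    exact (Infinite.natEmbedding ↥(F i)).injective (Subtype.coe_injective h)
  choose ε hεinj hεmem using hεex
  -- choose codings of the fibers of t'
  have hζex : ∀ z : Ω, ∃ j : Ω → ℕ,
      (∀ x1 x2, x1 ∈ (t' : Ω → Ω) ⁻¹' {z} → x2 ∈ (t' : Ω → Ω) ⁻¹' {z} → j x1 = j x2 → x1 = x2) ∧
      (((t' : Ω → Ω) ⁻¹' {z}).Infinite → ∀ n, ∃ x ∈ (t' : Ω → Ω) ⁻¹' {z}, j x = n) := by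
    intro z
    by_cases h : ((t' : Ω → Ω) ⁻¹' {z}).Infinite
    · haveI := h.to_subtype
      obtain ⟨d⟩ := nonempty_denumerable ↥((t' : Ω → Ω) ⁻¹' {z})
      set e := Denumerable.eqv ↥((t' : Ω → Ω) ⁻¹' {z}) with he
      refine ⟨fun x => if hx : x ∈ (t' : Ω → Ω) ⁻¹' {z} then e ⟨x, hx⟩ else 0, ?_, ?_⟩
      · intro x1 x2 h1 h2 hj
        dsimp only at hj
        rw [dif_pos h1, dif_pos h2] at hj
        have := e.injective hj
        injection this
      · intro _ n
        refine ⟨(e.symm n : Ω), (e.symm n).2, ?_⟩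
        dsimp only
        rw [dif_pos (e.symm n).2, Subtype.eta, Equiv.apply_symm_apply]
    · obtain ⟨j0, hj0⟩ := (countable_iff_exists_injective ↥((t' : Ω → Ω) ⁻¹' {z})).1 inferInstance
      refine ⟨fun x => if hx : x ∈ (t' : Ω → Ω) ⁻¹' {z} then j0 ⟨x, hx⟩ else 0, ?_, fun h' => absurd h' h⟩
      intro x1 x2 h1 h2 hj
      dsimp only at hj
      rw [dif_pos h1, dif_pos h2] at hj
      have := hj0 hj
      injection this
  choose ζ hζinj hζsurj using hζex
  -- the reshaping map
  set v : Ω → Ω := fun z => ε (idx z) (ζ (t' z) z / 2) with hv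
  have hvmem : ∀ z, v z ∈ F (idx z) := fun z => hεmem _ _
  have hvγ : ∀ {z w : Ω}, v z = v w → t' z = t' w := by
    intro z w h
    apply hidx_inj
    exact hFdisj (hvmem z) (h ▸ hvmem w)
  have hyv : ∀ z, (y : Ω → Ω) (v z) = (φ (idx z) : Ω) := fun z => hvmem z
  have hvpart : ∀ z w : Ω, ((y : Ω → Ω) ∘ v) z = ((y : Ω → Ω) ∘ v) w ↔ t' z = t' w := by
    intro z w
    constructor
    · intro h
      apply hidx_inj
      have h1 := hyv z
      have h2 := hyv w
      have : (φ (idx z) : Ω) = (φ (idx w) : Ω) := by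
        rw [← h1, ← h2]; exact h
      exact φ.injective (Subtype.coe_injective this)
    · intro h
      show (y : Ω → Ω) (v z) = (y : Ω → Ω) (v w)
      rw [hyv z, hyv w, hidx_congr h]
  -- v has infinite collapse
  have hζcongr : ∀ {z w : Ω}, t' z = t' w → ζ (t' z) w = ζ (t' w) w := by
    intro z w h
    exact congrArg (fun α => ζ α w) h
  have hvc : ℵ₀ ≤ collapse v := by
    obtain ⟨γ0, hγ0⟩ := Set.infinite_coe_iff.1 hKt |>.nonempty
    have hγ0' : ((t' : Ω → Ω) ⁻¹' {γ0}).Infinite := hγ0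
    have hp := fun j : ℕ => (hζsurj γ0 hγ0' (2 * j)).choose_spec
    have hq := fun j : ℕ => (hζsurj γ0 hγ0' (2 * j + 1)).choose_spec
    set p : ℕ → Ω := fun j => (hζsurj γ0 hγ0' (2 * j)).choose with hpdef
    set q : ℕ → Ω := fun j => (hζsurj γ0 hγ0' (2 * j + 1)).choose with hqdef
    have hvp : ∀ j, v (p j) = ε (idx (p j)) j := by
      intro j
      show ε (idx (p j)) (ζ (t' (p j)) (p j) / 2) = ε (idx (p j)) j
      have ht : t' (p j) = γ0 := (hp j).1
      rw [show ζ (t' (p j)) (p j) = ζ γ0 (p j) from congrArg (fun α => ζ α (p j)) ht,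
        (hp j).2]
      congr 1
      omega
    have hvq : ∀ j, v (q j) = ε (idx (q j)) j := by
      intro j
      show ε (idx (q j)) (ζ (t' (q j)) (q j) / 2) = ε (idx (q j)) j
      have ht : t' (q j) = γ0 := (hq j).1
      rw [show ζ (t' (q j)) (q j) = ζ γ0 (q j) from congrArg (fun α => ζ α (q j)) ht,
        (hq j).2]
      congr 1
      omega
    have hidxpq : ∀ j j' : ℕ, idx (p j) = idx (q j') := by
      intro j j'
      exact hidx_congr ((hp j).1.trans (hq j').1.symm)
    have hidxpp : ∀ j j' : ℕ, idx (p j) = idx (p j') := by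
      intro j j'
      exact hidx_congr ((hp j).1.trans (hp j').1.symm)
    apply aleph0_le_collapse_of_pairs p q
    · intro j
      rw [hvp j, hvq j, hidxpq j j]
    · intro j h
      have : ζ γ0 (p j) = ζ γ0 (q j) := by
        rw [show ζ γ0 (p j) = ζ (t' (p j)) (p j) from
          (congrArg (fun α => ζ α (p j)) (hp j).1).symm, h,
          show ζ (t' (q j)) (q j) = ζ γ0 (q j) from
          congrArg (fun α => ζ α (q j)) (hq j).1]
      rw [(hp j).2, (hq j).2] at this
      omega
    · intro i j hij h
      rw [hvp i, hvp j, hidxpp i j] at h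
      exact hij (hεinj _ h)
  -- v has infinite defect
  have hvd : ℵ₀ ≤ defect v := by
    unfold defect
    rw [aleph0_le_mk_set_iff]
    apply Set.infinite_of_injective_forall_mem
      (f := fun j : ℕ => (hFinf (2 * j + 1)).nonempty.choose)
    · intro j1 j2 h
      dsimp only at h
      have h1 := (hFinf (2 * j1 + 1)).nonempty.choose_spec
      have h2 := (hFinf (2 * j2 + 1)).nonempty.choose_spec
      rw [h] at h1
      have := hFdisj h1 h2
      omega
    · intro j
      have h1 := (hFinf (2 * j + 1)).nonempty.choose_spec
      intro hmem
      obtain ⟨z, hz⟩ := hmem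
      have := hFdisj (hz ▸ hvmem z) h1
      simp only [hidx] at this
      omega
  -- v has no infinite fibers
  have hvk : contract v = 0 := by
    apply contract_eq_zero_of_fibers_finite
    intro z0
    rw [Set.not_infinite, ← Set.finite_coe_iff]
    apply Finite.of_injective (f := fun x : ↥(v ⁻¹' {z0}) =>
      (⟨ζ (t' (x : Ω)) (x : Ω) % 2, Nat.mod_lt _ two_pos⟩ : Fin 2))
    intro x1 x2 h
    have hv1 : v (x1 : Ω) = z0 := x1.2
    have hv2 : v (x2 : Ω) = z0 := x2.2
    have hv12 : v (x1 : Ω) = v (x2 : Ω) := hv1.trans hv2.symm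
    have hte : t' (x1 : Ω) = t' (x2 : Ω) := hvγ hv12
    have hidxe : idx (x1 : Ω) = idx (x2 : Ω) := hidx_congr hte
    have hζ2 : ζ (t' (x2 : Ω)) (x2 : Ω) = ζ (t' (x1 : Ω)) (x2 : Ω) :=
      congrArg (fun α => ζ α (x2 : Ω)) hte.symm
    have hhalf : ζ (t' (x1 : Ω)) (x1 : Ω) / 2 = ζ (t' (x1 : Ω)) (x2 : Ω) / 2 := by
      have heq : ε (idx (x1 : Ω)) (ζ (t' (x1 : Ω)) (x1 : Ω) / 2) =
          ε (idx (x2 : Ω)) (ζ (t' (x2 : Ω)) (x2 : Ω) / 2) := hv12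
      rw [← hidxe] at heq
      have := hεinj _ heq
      rw [← hζ2]
      exact this
    have hmod : ζ (t' (x1 : Ω)) (x1 : Ω) % 2 = ζ (t' (x1 : Ω)) (x2 : Ω) % 2 := by
      have := congrArg Fin.val h
      simp only at this
      rw [← hζ2]
      exact this
    have hζeq : ζ (t' (x1 : Ω)) (x1 : Ω) = ζ (t' (x1 : Ω)) (x2 : Ω) := by omega
    apply Subtype.ext
    apply hζinj (t' (x1 : Ω)) (x1 : Ω) (x2 : Ω) rfl _ hζeq
    show t' (x2 : Ω) = t' (x1 : Ω)
    exact hte.symm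
  -- v is in K
  have hvmem12345 : toEnd v ∈ (S12345 : Set (Function.End Ω)) :=
    mem_S12345_K hvc hvd (by rw [show contract (toEnd v) = contract v from rfl, hvk]
                             exact aleph0_pos)
  have ht0 : (y * toEnd v : Function.End Ω) ∈ T := hT y hy (toEnd v) (hS hvmem12345)
  -- range of t0 and its complement
  have ht0val : ∀ z : Ω, ((y : Ω → Ω) ∘ v) z = (φ (idx z) : Ω) := hyv
  have hS'inf : (Set.range ((y : Ω → Ω) ∘ v)).Infinite := by
    apply Set.infinite_of_injective_forall_mem
      (f := fun γ : ↥(Set.range (t' : Ω → Ω)) => (φ (2 * ψ γ) : Ω))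
    · intro γ1 γ2 h
      have := φ.injective (Subtype.coe_injective h)
      have : ψ γ1 = ψ γ2 := by omega
      exact ψ.injective this
    · rintro ⟨γ, xγ, rfl⟩
      exact ⟨xγ, ht0val xγ⟩
  have hS'cinf : ((Set.range ((y : Ω → Ω) ∘ v))ᶜ).Infinite := by
    apply Set.infinite_of_injective_forall_mem
      (f := fun j : ℕ => (φ (2 * j + 1) : Ω))
    · intro j1 j2 h
      have := φ.injective (Subtype.coe_injective h)
      omega
    · intro j
      rintro ⟨z, hz⟩
      rw [ht0val z] at hz
      have := φ.injective (Subtype.coe_injective hz)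
      simp only [hidx] at this
      omega
  -- defect-fixing gadget
  obtain ⟨u, hur, hut, huk⟩ := gadget hS'inf hrng
  have huc : ℵ₀ ≤ collapse u := by
    rw [collapse_eq hut, aleph0_le_mk_set_iff]
    exact hS'cinf
  have hukk : contract u < ℵ₀ := lt_of_le_of_lt huk one_lt_aleph0
  have hud : defect u = defect t' := by unfold defect; rw [hur]
  have humem : toEnd u ∈ T := by
    by_cases hm : defect t' < ℵ₀
    · exact hCD (toEnd u) huc (by
        show defect u < ℵ₀
        rw [hud]; exact hm) hukk
    · apply hS
      apply mem_S12345_K huc _ hukk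
      show ℵ₀ ≤ defect u
      rw [hud]
      exact not_lt.1 hm
  have ht1 : (toEnd u * (y * toEnd v) : Function.End Ω) ∈ T := hT (toEnd u) humem _ ht0
  have hvalmem : ∀ z : Ω, ((y : Ω → Ω) ∘ v) z ∈ Set.range ((y : Ω → Ω) ∘ v) :=
    fun z => Set.mem_range_self z
  have hpart1 : ∀ z w : Ω, (u ∘ ((y : Ω → Ω) ∘ v)) z = (u ∘ ((y : Ω → Ω) ∘ v)) w ↔
      t' z = t' w := by
    intro z w
    constructor
    · intro h
      exact (hvpart z w).1 (hut.1 (hvalmem z) (hvalmem w) h)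
    · intro h
      show u (((y : Ω → Ω) ∘ v) z) = u (((y : Ω → Ω) ∘ v) w)
      rw [show ((y : Ω → Ω) ∘ v) z = ((y : Ω → Ω) ∘ v) w from (hvpart z w).2 h]
  have hrange1 : Set.range (u ∘ ((y : Ω → Ω) ∘ v)) = Set.range (t' : Ω → Ω) := by
    rw [Set.range_comp, hut.2, hur]
  obtain ⟨σ, hσb, hσeq⟩ := realize hpart1 hrange1
  have : t' = toEnd σ * (toEnd u * (y * toEnd v)) := by
    funext z
    rw [hσeq]; rfl
  rw [this]
  exact hT (toEnd σ) (hS (mem_S12345_sym hσb)) _ ht1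

theorem mul_eq_comp (f g : Function.End Ω) : ((f * g : Function.End Ω) : Ω → Ω) = (f : Ω → Ω) ∘ g := rfl

theorem S4_closed {f g : Function.End Ω} (hf : f ∈ (S4 : Set (Function.End Ω)))
    (hg : g ∈ (S4 : Set (Function.End Ω))) : f * g ∈ (S4 : Set (Function.End Ω)) := by
  by_cases hc : ℵ₀ ≤ collapse (f * g)
  · exact Or.inl hc
  · right
    rw [not_le] at hc
    have hcg : collapse (g : Ω → Ω) < ℵ₀ :=
      lt_of_le_of_lt (collapse_comp_right_le (f := (f : Ω → Ω)) (g := g)) hc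
    have hdg : defect (g : Ω → Ω) < ℵ₀ := hg.resolve_left (not_le.2 hcg)
    have hdf : defect (f : Ω → Ω) < ℵ₀ := by
      rcases hf with hf | hf
      · exact absurd (aleph0_le_collapse_comp hf hdg) (not_le.2 hc)
      · exact hf
    calc defect ((f * g : Function.End Ω) : Ω → Ω) ≤ defect (f : Ω → Ω) + defect (g : Ω → Ω) :=
          defect_comp_le
      _ < ℵ₀ := Cardinal.add_lt_aleph0 hdf hdg

theorem defect_g_lt_of_comp {f g : Ω → Ω} (hcf : collapse f < ℵ₀)
    (hdfg : defect (f ∘ g) < ℵ₀) : defect g < ℵ₀ := by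
  classical
  obtain ⟨T, hT⟩ := exists_transversal f
  have hTc : (Tᶜ : Set Ω).Finite := mk_set_lt_aleph0_iff.1 (collapse_eq hT ▸ hcf)
  have hD : ((Set.range (f ∘ g))ᶜ : Set Ω).Finite := mk_set_lt_aleph0_iff.1 hdfg
  set T1 : Set Ω := {t | (t ∈ T ∧ t ∉ Set.range g) ∧ f t ∈ f '' Set.range g} with hT1
  set T2 : Set Ω := {t | (t ∈ T ∧ t ∉ Set.range g) ∧ f t ∉ f '' Set.range g} with hT2
  have hrcomp : Set.range (f ∘ g) = f '' Set.range g := Set.range_comp f g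
  have hT2fin : T2.Finite := by
    rw [← Set.finite_coe_iff]
    haveI := hD.to_subtype
    apply Finite.of_injective (f := fun t : ↥T2 => (⟨f (t : Ω), by
      rw [hrcomp] at hD ⊢
      exact t.2.2⟩ : ↥((Set.range (f ∘ g))ᶜ)))
    intro t1 t2 h
    simp only [Subtype.mk.injEq] at h
    exact Subtype.ext (hT.1 t1.2.1.1 t2.2.1.1 h)
  have hT1fin : T1.Finite := by
    rw [← Set.finite_coe_iff]
    haveI := hTc.to_subtype
    have hch : ∀ t : ↥T1, ∃ x, x ∈ Set.range g ∧ f x = f (t : Ω) := by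
      rintro ⟨t, ⟨htT, htg⟩, him⟩
      obtain ⟨x, hx, he⟩ := him
      exact ⟨x, hx, he⟩
    choose w hw1 hw2 using hch
    apply Finite.of_injective (f := fun t : ↥T1 => (⟨w t, by
      intro hwT
      have : w t = (t : Ω) := hT.1 hwT t.2.1.1 (hw2 t)
      exact t.2.1.2 (this ▸ hw1 t)⟩ : ↥(Tᶜ)))
    intro t1 t2 h
    simp only [Subtype.mk.injEq] at h
    apply Subtype.ext
    apply hT.1 t1.2.1.1 t2.2.1.1
    rw [← hw2 t1, ← hw2 t2, h]
  have hsub : ((Set.range g)ᶜ : Set Ω) ⊆ T1 ∪ T2 ∪ Tᶜ := by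
    intro w hw
    by_cases hwT : w ∈ T
    · by_cases him : f w ∈ f '' Set.range g
      · exact Or.inl (Or.inl ⟨⟨hwT, hw⟩, him⟩)
      · exact Or.inl (Or.inr ⟨⟨hwT, hw⟩, him⟩)
    · exact Or.inr hwT
  unfold defect
  rw [mk_set_lt_aleph0_iff]
  exact ((hT1fin.union hT2fin).union hTc).subset hsub

theorem S34_closed {f g : Function.End Ω} (hf : f ∈ (S3 ∩ S4 : Set (Function.End Ω)))
    (hg : g ∈ (S3 ∩ S4 : Set (Function.End Ω))) :
    f * g ∈ (S3 ∩ S4 : Set (Function.End Ω)) := by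
  refine ⟨?_, S4_closed hf.2 hg.2⟩
  by_cases hd : ℵ₀ ≤ defect (f * g)
  · exact Or.inr hd
  · left
    rw [not_le] at hd
    have hdf : defect (f : Ω → Ω) < ℵ₀ :=
      lt_of_le_of_lt (defect_comp_left_le (f := (f : Ω → Ω)) (g := g)) hd
    have hcf : collapse (f : Ω → Ω) < ℵ₀ := hf.1.resolve_right (not_le.2 hdf)
    have hdg : defect (g : Ω → Ω) < ℵ₀ := defect_g_lt_of_comp hcf hd
    have hcg : collapse (g : Ω → Ω) < ℵ₀ := hg.1.resolve_right (not_le.2 hdg)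
    calc collapse ((f * g : Function.End Ω) : Ω → Ω)
        ≤ collapse (f : Ω → Ω) + collapse (g : Ω → Ω) := collapse_comp_le
      _ < ℵ₀ := Cardinal.add_lt_aleph0 hcf hcg

theorem S24_closed {f g : Function.End Ω} (hf : f ∈ (S2 ∩ S4 : Set (Function.End Ω)))
    (hg : g ∈ (S2 ∩ S4 : Set (Function.End Ω))) :
    f * g ∈ (S2 ∩ S4 : Set (Function.End Ω)) := by
  refine ⟨?_, S4_closed hf.2 hg.2⟩
  by_cases hdg : defect (g : Ω → Ω) = 0
  · have hgs : Function.Surjective (g : Ω → Ω) := defect_eq_zero_iff.1 hdg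
    by_cases hdf : defect (f : Ω → Ω) = 0
    · right
      show defect ((f : Ω → Ω) ∘ g) = 0
      exact (defect_comp_surj hgs).trans hdf
    · left
      have hcf : 0 < collapse (f : Ω → Ω) := hf.1.resolve_right hdf
      apply pos_iff_ne_zero.2
      intro h0
      have hfginj : Function.Injective ((f : Ω → Ω) ∘ g) := collapse_eq_zero_iff.1 h0
      have hfinj : Function.Injective (f : Ω → Ω) := by
        intro a b hab
        obtain ⟨a', rfl⟩ := hgs a
        obtain ⟨b', rfl⟩ := hgs b
        rw [hfginj hab]
      exact (pos_iff_ne_zero.1 hcf) (collapse_eq_zero_iff.2 hfinj)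
  · left
    have hcg : 0 < collapse (g : Ω → Ω) := hg.1.resolve_right hdg
    exact lt_of_lt_of_le hcg collapse_comp_right_le

theorem S45_closed {f g : Function.End Ω} (hf : f ∈ (S4 ∩ S5 : Set (Function.End Ω)))
    (hg : g ∈ (S4 ∩ S5 : Set (Function.End Ω))) :
    f * g ∈ (S4 ∩ S5 : Set (Function.End Ω)) := by
  refine ⟨S4_closed hf.1 hg.1, ?_⟩
  show contract ((f : Ω → Ω) ∘ g) < ℵ₀
  calc contract ((f : Ω → Ω) ∘ g) ≤ contract (f : Ω → Ω) + contract (g : Ω → Ω) :=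
        contract_comp_le
    _ < ℵ₀ := Cardinal.add_lt_aleph0 hf.2 hg.2

theorem V_closed {f g : Function.End Ω} (hf : f ∈ (SetV : Set (Function.End Ω)))
    (hg : g ∈ (SetV : Set (Function.End Ω))) : f * g ∈ (SetV : Set (Function.End Ω)) := by
  rcases hf with hf | hf <;> rcases hg with hg | hg
  · -- both in the condition part
    rcases hg with hg | hg
    · exact Or.inl (Or.inl (le_trans hg collapse_comp_right_le))
    · rcases hf with hf | hf
      · exact Or.inl (Or.inl (aleph0_le_collapse_comp hf hg.2))
      · left; right
        constructor
        · exact lt_of_lt_of_le hf.1 defect_comp_left_le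
        · calc defect ((f * g : Function.End Ω) : Ω → Ω)
              ≤ defect (f : Ω → Ω) + defect (g : Ω → Ω) := defect_comp_le
            _ < ℵ₀ := Cardinal.add_lt_aleph0 hf.2 hg.2
  · -- g bijective
    left
    have h1 : collapse ((f : Ω → Ω) ∘ g) = collapse (f : Ω → Ω) := collapse_comp_bij_right hg
    have h2 : defect ((f : Ω → Ω) ∘ g) = defect (f : Ω → Ω) := defect_comp_surj hg.2
    rcases hf with hf | hf
    · exact Or.inl (by rw [show collapse ((f * g : Function.End Ω) : Ω → Ω) =
        collapse ((f : Ω → Ω) ∘ g) from rfl, h1]; exact hf)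
    · right
      constructor
      · rw [show defect ((f * g : Function.End Ω) : Ω → Ω) =
          defect ((f : Ω → Ω) ∘ g) from rfl, h2]; exact hf.1
      · rw [show defect ((f * g : Function.End Ω) : Ω → Ω) =
          defect ((f : Ω → Ω) ∘ g) from rfl, h2]; exact hf.2
  · -- f bijective
    left
    have h1 : collapse ((f : Ω → Ω) ∘ g) = collapse (g : Ω → Ω) := collapse_comp_bij_left hf
    have h2 : defect ((f : Ω → Ω) ∘ g) = defect (g : Ω → Ω) := defect_comp_bij_left hf
    rcases hg with hg | hg
    · exact Or.inl (by rw [show collapse ((f * g : Function.End Ω) : Ω → Ω) =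
        collapse ((f : Ω → Ω) ∘ g) from rfl, h1]; exact hg)
    · right
      constructor
      · rw [show defect ((f * g : Function.End Ω) : Ω → Ω) =
          defect ((f : Ω → Ω) ∘ g) from rfl, h2]; exact hg.1
      · rw [show defect ((f * g : Function.End Ω) : Ω → Ω) =
          defect ((f : Ω → Ω) ∘ g) from rfl, h2]; exact hg.2
  · exact Or.inr (hf.comp hg)

theorem V_sub_S4 : (SetV : Set (Function.End Ω)) ⊆ S4 := by
  rintro f (hf | hf)
  · rcases hf with hf | hf
    · exact Or.inl hf
    · exact Or.inr hf.2
  · right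
    rw [defect_eq_zero_iff.2 hf.2]
    exact aleph0_pos

section Witnesses

theorem a0_props (en : Ω ≃ ℕ) : ∃ a : Function.End Ω, Function.Injective a ∧ 0 < defect a ∧ defect a < ℵ₀ := by
  refine ⟨fun x => en.symm (en x + 1), ?_, ?_⟩
  · intro x y h
    have := en.symm.injective h
    have : en x = en y := by omega
    exact en.injective this
  · have hcompl : (Set.range (fun x : Ω => en.symm (en x + 1)))ᶜ = {en.symm 0} := by
      ext z
      simp only [Set.mem_compl_iff, Set.mem_range, Set.mem_singleton_iff]
      constructor
      · intro h
        by_contra hz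
        apply h
        have hz0 : en z ≠ 0 := by
          intro h0
          apply hz
          rw [← h0, Equiv.symm_apply_apply]
        obtain ⟨m, hm⟩ := Nat.exists_eq_succ_of_ne_zero hz0
        refine ⟨en.symm m, ?_⟩
        rw [Equiv.apply_symm_apply, show m + 1 = en z by omega, Equiv.symm_apply_apply]
      · rintro rfl ⟨x, hx⟩
        have := en.symm.injective hx
        omega
    constructor
    · rw [show defect (fun x : Ω => en.symm (en x + 1)) =
        #((Set.range (fun x : Ω => en.symm (en x + 1)))ᶜ : Set Ω) from rfl, hcompl,
        Cardinal.mk_singleton]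
      exact zero_lt_one
    · rw [show defect (fun x : Ω => en.symm (en x + 1)) =
        #((Set.range (fun x : Ω => en.symm (en x + 1)))ᶜ : Set Ω) from rfl, hcompl,
        Cardinal.mk_singleton]
      exact one_lt_aleph0

theorem b0_props (en : Ω ≃ ℕ) : ∃ b : Function.End Ω, Function.Surjective b ∧ ¬ Function.Injective b ∧
    0 < collapse b ∧ collapse b < ℵ₀ := by
  refine ⟨fun x => en.symm (en x - 1), ?_, ?_, ?_⟩
  · intro z
    refine ⟨en.symm (en z + 1), ?_⟩
    show en.symm (en (en.symm (en z + 1)) - 1) = z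
    rw [Equiv.apply_symm_apply]
    simp only [Nat.add_sub_cancel, Equiv.symm_apply_apply]
  · intro hinj
    have h0 : (fun x : Ω => en.symm (en x - 1)) (en.symm 0) = en.symm 0 := by
      simp only [Equiv.apply_symm_apply]
    have h1 : (fun x : Ω => en.symm (en x - 1)) (en.symm 1) = en.symm 0 := by
      simp only [Equiv.apply_symm_apply]
    have := hinj (h0.trans h1.symm)
    have := en.symm.injective this
    omega
  · have htrans : IsTransversal (fun x : Ω => en.symm (en x - 1)) {x : Ω | en x ≠ 0} := by
      constructor
      · intro x hx y hy h
        have := en.symm.injective h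
        have hx' : en x ≠ 0 := hx
        have hy' : en y ≠ 0 := hy
        have : en x = en y := by omega
        exact en.injective this
      · apply Set.eq_of_subset_of_subset (Set.image_subset_range _ _)
        rintro _ ⟨z, rfl⟩
        refine ⟨en.symm (en z - 1 + 1), ?_, ?_⟩
        · show en (en.symm (en z - 1 + 1)) ≠ 0
          rw [Equiv.apply_symm_apply]
          omega
        · show en.symm (en (en.symm (en z - 1 + 1)) - 1) = en.symm (en z - 1)
          rw [Equiv.apply_symm_apply]
          congr 1
    have hcompl : ({x : Ω | en x ≠ 0}ᶜ : Set Ω) = {en.symm 0} := by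
      ext z
      simp only [Set.mem_compl_iff, Set.mem_setOf_eq, not_not, Set.mem_singleton_iff]
      rw [Equiv.eq_symm_apply]
    constructor
    · rw [collapse_eq htrans, hcompl, Cardinal.mk_singleton]
      exact zero_lt_one
    · rw [collapse_eq htrans, hcompl, Cardinal.mk_singleton]
      exact one_lt_aleph0

theorem c0_props (en : Ω ≃ ℕ) : ∃ c : Function.End Ω, Function.Surjective c ∧ ℵ₀ ≤ collapse c ∧
    contract c = 0 := by
  refine ⟨fun x => en.symm (en x / 2), ?_, ?_, ?_⟩
  · intro z
    refine ⟨en.symm (2 * en z), ?_⟩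
    show en.symm (en (en.symm (2 * en z)) / 2) = z
    rw [Equiv.apply_symm_apply]
    have : 2 * en z / 2 = en z := by omega
    rw [this, Equiv.symm_apply_apply]
  · apply aleph0_le_collapse_of_pairs (p := fun j => en.symm (2 * j))
      (q := fun j => en.symm (2 * j + 1))
    · intro j
      show en.symm (en (en.symm (2 * j)) / 2) = en.symm (en (en.symm (2 * j + 1)) / 2)
      rw [Equiv.apply_symm_apply, Equiv.apply_symm_apply]
      congr 1
      omega
    · intro j h
      have := en.symm.injective h
      omega
    · intro i j hij h
      show False
      have h' : en.symm (en (en.symm (2 * i)) / 2) = en.symm (en (en.symm (2 * j)) / 2) := h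
      rw [Equiv.apply_symm_apply, Equiv.apply_symm_apply] at h'
      have := en.symm.injective h'
      omega
  · apply contract_eq_zero_of_fibers_finite
    intro z
    rw [Set.not_infinite]
    apply Set.Finite.subset ((Set.finite_singleton (en.symm (2 * en z + 1))).insert
      (en.symm (2 * en z)))
    intro x hx
    have hx' : en.symm (en x / 2) = z := hx
    have : en x / 2 = en z := by
      have := congrArg en hx'
      rwa [Equiv.apply_symm_apply] at this
    simp only [Set.mem_insert_iff, Set.mem_singleton_iff]
    rcases (by omega : en x = 2 * en z ∨ en x = 2 * en z + 1) with h | h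
    · left; rw [← h, Equiv.symm_apply_apply]
    · right; rw [← h, Equiv.symm_apply_apply]

theorem y1_props (en : Ω ≃ ℕ) : ∃ y : Function.End Ω, ℵ₀ ≤ collapse y ∧ ℵ₀ ≤ defect y ∧
    ℵ₀ ≤ contract y := by
  refine ⟨fun x => en.symm (2 * (Nat.unpair (en x)).1), ?_, ?_, ?_⟩
  case _ =>
    have hfib : ∀ n : ℕ, ((fun x : Ω => en.symm (2 * (Nat.unpair (en x)).1)) ⁻¹'
        {en.symm (2 * n)}).Infinite := by
      intro n
      apply Set.infinite_of_injective_forall_mem (f := fun m : ℕ => en.symm (Nat.pair n m))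
      · intro m1 m2 h
        have := congrArg en h
        rw [Equiv.apply_symm_apply, Equiv.apply_symm_apply] at this
        have := congrArg (fun c => (Nat.unpair c).2) this
        simpa only [Nat.unpair_pair] using this
      · intro m
        simp only [Set.mem_preimage, Set.mem_singleton_iff]
        show en.symm (2 * (Nat.unpair (en (en.symm (Nat.pair n m)))).1) = en.symm (2 * n)
        rw [Equiv.apply_symm_apply, Nat.unpair_pair]
    exact aleph0_le_collapse_of_infinite_fiber (hfib 0)
  case _ =>
    unfold defect
    rw [aleph0_le_mk_set_iff]
    apply Set.infinite_of_injective_forall_mem (f := fun j : ℕ => en.symm (2 * j + 1))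
    · intro j1 j2 h
      have := en.symm.injective h
      omega
    · intro j
      rintro ⟨x, hx⟩
      have := en.symm.injective hx
      omega
  case _ =>
    rw [show contract (fun x : Ω => en.symm (2 * (Nat.unpair (en x)).1)) =
      #({α : Ω | ((fun x : Ω => en.symm (2 * (Nat.unpair (en x)).1)) ⁻¹' {α}).Infinite} : Set Ω)
      from rfl, aleph0_le_mk_set_iff]
    apply Set.infinite_of_injective_forall_mem (f := fun n : ℕ => en.symm (2 * n))
    · intro n1 n2 h
      have := en.symm.injective h
      omega
    · intro n
      show ((fun x : Ω => en.symm (2 * (Nat.unpair (en x)).1)) ⁻¹' {en.symm (2 * n)}).Infinite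
      apply Set.infinite_of_injective_forall_mem (f := fun m : ℕ => en.symm (Nat.pair n m))
      · intro m1 m2 h
        have := congrArg en h
        rw [Equiv.apply_symm_apply, Equiv.apply_symm_apply] at this
        have := congrArg (fun c => (Nat.unpair c).2) this
        simpa only [Nat.unpair_pair] using this
      · intro m
        simp only [Set.mem_preimage, Set.mem_singleton_iff]
        show en.symm (2 * (Nat.unpair (en (en.symm (Nat.pair n m)))).1) = en.symm (2 * n)
        rw [Equiv.apply_symm_apply, Nat.unpair_pair]

end Witnesses

end Claims

section Chars
set_option linter.unusedSectionVars false

theorem char_V {f : Function.End Ω} (hf4 : f ∈ (S4 : Set (Function.End Ω)))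
    (hfV : f ∉ (SetV : Set (Function.End Ω))) :
    Function.Surjective f ∧ 0 < collapse f ∧ collapse f < ℵ₀ := by
  rw [SetV, Set.mem_union, not_or] at hfV
  obtain ⟨h1, h2⟩ := hfV
  rw [Set.mem_setOf_eq, not_or, not_and_or] at h1
  have hcF : collapse f < ℵ₀ := not_le.1 h1.1
  have hdF : defect f < ℵ₀ := hf4.resolve_left h1.1
  have hd0 : defect f = 0 := by
    rcases h1.2 with h | h
    · exact le_zero_iff.1 (not_lt.1 h)
    · exact absurd hdF h
  have hsurj : Function.Surjective f := defect_eq_zero_iff.1 hd0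
  refine ⟨hsurj, ?_, hcF⟩
  apply pos_iff_ne_zero.2
  intro h0
  exact h2 ⟨collapse_eq_zero_iff.1 h0, hsurj⟩

theorem char_S24 {f : Function.End Ω} (hf4 : f ∈ (S4 : Set (Function.End Ω)))
    (hfV : f ∉ (S2 ∩ S4 : Set (Function.End Ω))) :
    Function.Injective f ∧ 0 < defect f ∧ defect f < ℵ₀ := by
  have hf2 : f ∉ (S2 : Set (Function.End Ω)) := fun h => hfV ⟨h, hf4⟩
  rw [S2, Set.mem_setOf_eq, not_or] at hf2
  have hc0 : collapse f = 0 := le_zero_iff.1 (not_lt.1 hf2.1)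
  have hdF : defect f < ℵ₀ := by
    rcases hf4 with h | h
    · rw [hc0] at h
      exact absurd h (by simp [Cardinal.aleph0_ne_zero])
    · exact h
  exact ⟨collapse_eq_zero_iff.1 hc0, pos_iff_ne_zero.2 hf2.2, hdF⟩

theorem char_S34 {f : Function.End Ω} (hf4 : f ∈ (S4 : Set (Function.End Ω)))
    (hfV : f ∉ (S3 ∩ S4 : Set (Function.End Ω))) :
    ℵ₀ ≤ collapse f ∧ defect f < ℵ₀ := by
  have hf3 : f ∉ (S3 : Set (Function.End Ω)) := fun h => hfV ⟨h, hf4⟩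
  rw [S3, Set.mem_setOf_eq, not_or] at hf3
  exact ⟨not_lt.1 hf3.1, not_le.1 hf3.2⟩

theorem char_S45 {f : Function.End Ω} (hf4 : f ∈ (S4 : Set (Function.End Ω)))
    (hfV : f ∉ (S4 ∩ S5 : Set (Function.End Ω))) : ℵ₀ ≤ contract f := by
  have hf5 : f ∉ (S5 : Set (Function.End Ω)) := fun h => hfV ⟨hf4, h⟩
  rw [S5, Set.mem_setOf_eq] at hf5
  exact not_lt.1 hf5

end Chars

section GenAll
variable [Countable Ω] [Infinite Ω]
set_option linter.unusedSectionVars false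

theorem genAll {T : Set (Function.End Ω)} (hT : ∀ a ∈ T, ∀ b ∈ T, a * b ∈ T)
    (hS : S12345 ⊆ T)
    (hA : ∃ a ∈ T, Function.Injective a ∧ 0 < defect a ∧ defect a < ℵ₀)
    (hB : ∃ b ∈ T, Function.Surjective b ∧ 0 < collapse b ∧ collapse b < ℵ₀)
    (hX : ∃ x ∈ T, ℵ₀ ≤ collapse x ∧ defect x < ℵ₀)
    (hY : ∃ y ∈ T, ℵ₀ ≤ contract y) :
    (S4 : Set (Function.End Ω)) ⊆ T := by
  obtain ⟨a, haT, hai, had0, hadF⟩ := hA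
  obtain ⟨b, hbT, hbs, hbc0, hbcF⟩ := hB
  obtain ⟨x, hxT, hxc, hxd⟩ := hX
  obtain ⟨y, hyT, hyk⟩ := hY
  have AllA := claimA hT hS haT hai hadF had0
  have AllB := claimB hT hS hbT hbs hbc0 hbcF
  have AllCD := claimCD hT hS (fun u h1 h2 h3 => AllA u h1 h2 h3)
    (fun u h1 h2 h3 => AllB u h1 h2 h3) hxT hxc hxd
  have AllK := claimKinf hT hS (fun u h1 h2 h3 => AllCD u h1 h2 h3) hyT hyk
  intro h hh
  by_cases hc0 : collapse h = 0
  · have hinj : Function.Injective (h : Ω → Ω) := collapse_eq_zero_iff.1 hc0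
    by_cases hd0 : defect h = 0
    · exact hS (mem_S12345_sym ⟨hinj, defect_eq_zero_iff.1 hd0⟩)
    · have hdF : defect h < ℵ₀ := by
        rcases hh with h' | h'
        · rw [hc0] at h'
          exact absurd h' (by simp [Cardinal.aleph0_ne_zero])
        · exact h'
      exact AllA h hinj (pos_iff_ne_zero.2 hd0) hdF
  · by_cases hcF : collapse h < ℵ₀
    · have hdF : defect h < ℵ₀ := hh.resolve_left (not_le.2 hcF)
      by_cases hd0 : defect h = 0
      · exact AllB h (defect_eq_zero_iff.1 hd0) (pos_iff_ne_zero.2 hc0) hcF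
      · exact hS (mem_S12345_W (pos_iff_ne_zero.2 hc0) hcF (pos_iff_ne_zero.2 hd0) hdF)
    · have hcI : ℵ₀ ≤ collapse h := not_lt.1 hcF
      by_cases hk : contract h < ℵ₀
      · by_cases hdF : defect h < ℵ₀
        · exact AllCD h hcI hdF hk
        · exact hS (mem_S12345_K hcI (not_lt.1 hdF) hk)
      · exact AllK h (not_lt.1 hk)

end GenAll

end Px

/-- The maximal subsemigroups of `S₄` containing `S_{1,2,3,4,5}` are exactly
`V`, `S_{2,4}`, `S_{3,4}` and `S_{4,5}`. -/
theorem stmt16 (Ω : Type) [Countable Ω] [Infinite Ω] (M : Set (Function.End Ω))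
    (hM : ∀ a ∈ M, ∀ b ∈ M, a * b ∈ M)
    (hsub : S12345 ⊆ M) (hlt : M ⊂ S4) :
    (¬ ∃ T : Set (Function.End Ω),
        (∀ a ∈ T, ∀ b ∈ T, a * b ∈ T) ∧ M ⊂ T ∧ T ⊂ S4) ↔
      (M = SetV ∨ M = S2 ∩ S4 ∨ M = S3 ∩ S4 ∨ M = S4 ∩ S5) := by
  obtain ⟨den⟩ := nonempty_denumerable Ω
  have en : Ω ≃ ℕ := Denumerable.eqv Ω
  obtain ⟨a0, ha0i, ha0d0, ha0dF⟩ := Px.a0_props en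
  obtain ⟨b0, hb0s, hb0ni, hb0c0, hb0cF⟩ := Px.b0_props en
  obtain ⟨c0, hc0s, hc0c, hc0k⟩ := Px.c0_props en
  obtain ⟨y1, hy1c, hy1d, hy1k⟩ := Px.y1_props en
  have hb0S4 : b0 ∈ (S4 : Set (Function.End Ω)) := Or.inr (by
    rw [Px.defect_eq_zero_iff.2 hb0s]; exact aleph0_pos)
  have hb0nV : b0 ∉ (SetV : Set (Function.End Ω)) := by
    rintro (h | h)
    · rcases h with h | h
      · exact absurd h (not_le.2 hb0cF)
      · rw [Px.defect_eq_zero_iff.2 hb0s] at h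
        exact lt_irrefl 0 h.1
    · exact hb0ni h.1
  have ha0S4 : a0 ∈ (S4 : Set (Function.End Ω)) := Or.inr ha0dF
  have ha0n24 : a0 ∉ (S2 ∩ S4 : Set (Function.End Ω)) := by
    rintro ⟨h2, _⟩
    rcases h2 with h | h
    · rw [Px.collapse_eq_zero_of_injective ha0i] at h
      exact lt_irrefl 0 h
    · exact (pos_iff_ne_zero.1 ha0d0) h
  have hc0S4 : c0 ∈ (S4 : Set (Function.End Ω)) := Or.inl hc0c
  have hc0n34 : c0 ∉ (S3 ∩ S4 : Set (Function.End Ω)) := by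
    rintro ⟨h3, _⟩
    rcases h3 with h | h
    · exact absurd hc0c (not_le.2 h)
    · rw [Px.defect_eq_zero_iff.2 hc0s] at h
      exact Cardinal.aleph0_ne_zero (le_zero_iff.1 h)
  have hy1S4 : y1 ∈ (S4 : Set (Function.End Ω)) := Or.inl hy1c
  have hy1n45 : y1 ∉ (S4 ∩ S5 : Set (Function.End Ω)) := fun h => absurd h.2 (not_lt.2 hy1k)
  have hy1S34 : y1 ∈ (S3 ∩ S4 : Set (Function.End Ω)) := ⟨Or.inr hy1d, Or.inl hy1c⟩
  constructor
  · -- maximality implies M is one of the four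
    intro hmax
    by_cases hV : M ⊆ SetV
    · left
      by_contra hne
      exact hmax ⟨SetV, fun p hp q hq => Px.V_closed hp hq,
        Set.ssubset_iff_subset_ne.2 ⟨hV, hne⟩,
        Set.ssubset_iff_subset_ne.2 ⟨Px.V_sub_S4, fun he => hb0nV (by rw [he]; exact hb0S4)⟩⟩
    · by_cases h24 : M ⊆ S2 ∩ S4
      · right; left
        by_contra hne
        exact hmax ⟨S2 ∩ S4, fun p hp q hq => Px.S24_closed hp hq,
          Set.ssubset_iff_subset_ne.2 ⟨h24, hne⟩,
          Set.ssubset_iff_subset_ne.2 ⟨Set.inter_subset_right,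
            fun he => ha0n24 (by rw [he]; exact ha0S4)⟩⟩
      · by_cases h34 : M ⊆ S3 ∩ S4
        · right; right; left
          by_contra hne
          exact hmax ⟨S3 ∩ S4, fun p hp q hq => Px.S34_closed hp hq,
            Set.ssubset_iff_subset_ne.2 ⟨h34, hne⟩,
            Set.ssubset_iff_subset_ne.2 ⟨Set.inter_subset_right,
              fun he => hc0n34 (by rw [he]; exact hc0S4)⟩⟩
        · by_cases h45 : M ⊆ S4 ∩ S5
          · right; right; right
            by_contra hne
            exact hmax ⟨S4 ∩ S5, fun p hp q hq => Px.S45_closed hp hq,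
              Set.ssubset_iff_subset_ne.2 ⟨h45, hne⟩,
              Set.ssubset_iff_subset_ne.2 ⟨Set.inter_subset_left,
                fun he => hy1n45 (by rw [he]; exact hy1S4)⟩⟩
          · exfalso
            obtain ⟨fb, hfbM, hfbn⟩ := Set.not_subset.1 hV
            obtain ⟨fa, hfaM, hfan⟩ := Set.not_subset.1 h24
            obtain ⟨fx, hfxM, hfxn⟩ := Set.not_subset.1 h34
            obtain ⟨fy, hfyM, hfyn⟩ := Set.not_subset.1 h45
            have hcb := Px.char_V (hlt.1 hfbM) hfbn
            have hca := Px.char_S24 (hlt.1 hfaM) hfan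
            have hcx := Px.char_S34 (hlt.1 hfxM) hfxn
            have hcy := Px.char_S45 (hlt.1 hfyM) hfyn
            have hS4M : (S4 : Set (Function.End Ω)) ⊆ M :=
              Px.genAll hM hsub ⟨fa, hfaM, hca⟩ ⟨fb, hfbM, hcb⟩ ⟨fx, hfxM, hcx⟩
                ⟨fy, hfyM, hcy⟩
            exact hlt.ne (Set.Subset.antisymm hlt.1 hS4M)
  · -- each of the four is maximal
    rintro hM0 ⟨T, hTc, hMT, hTS4⟩
    obtain ⟨f, hfT, hfM⟩ := Set.exists_of_ssubset hMT
    have hST : S12345 ⊆ T := fun z hz => hMT.1 (hsub hz)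
    have hf4 : f ∈ (S4 : Set (Function.End Ω)) := hTS4.1 hfT
    have hS4T : (S4 : Set (Function.End Ω)) ⊆ T := by
      rcases hM0 with rfl | rfl | rfl | rfl
      · -- M = SetV
        have hch := Px.char_V hf4 hfM
        have AllB := Px.claimB hTc hST hfT hch.1 hch.2.1 hch.2.2
        intro h hh
        by_cases hhV : h ∈ (SetV : Set (Function.End Ω))
        · exact hMT.1 hhV
        · have hc := Px.char_V hh hhV
          exact AllB h hc.1 hc.2.1 hc.2.2
      · -- M = S2 ∩ S4
        have hch := Px.char_S24 hf4 hfM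
        have AllA := Px.claimA hTc hST hfT hch.1 hch.2.2 hch.2.1
        intro h hh
        by_cases hh24 : h ∈ (S2 ∩ S4 : Set (Function.End Ω))
        · exact hMT.1 hh24
        · have hc := Px.char_S24 hh hh24
          exact AllA h hc.1 hc.2.1 hc.2.2
      · -- M = S3 ∩ S4
        have hch := Px.char_S34 hf4 hfM
        have hAavail : ∀ u : Function.End Ω, Function.Injective u → 0 < defect u →
            defect u < ℵ₀ → u ∈ T := fun u h1 _ h3 => hMT.1
          ⟨Or.inl (by rw [Px.collapse_eq_zero_of_injective h1]; exact aleph0_pos),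
            Or.inr h3⟩
        have hBavail : ∀ u : Function.End Ω, Function.Surjective u → 0 < collapse u →
            collapse u < ℵ₀ → u ∈ T := fun u h1 _ h3 => hMT.1
          ⟨Or.inl h3, Or.inr (by rw [Px.defect_eq_zero_iff.2 h1]; exact aleph0_pos)⟩
        have AllCD := Px.claimCD hTc hST hAavail hBavail hfT hch.1 hch.2
        have AllK := Px.claimKinf hTc hST (fun u h1 h2 h3 => AllCD u h1 h2 h3)
          (hMT.1 hy1S34) hy1k
        intro h hh
        by_cases hh34 : h ∈ (S3 ∩ S4 : Set (Function.End Ω))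
        · exact hMT.1 hh34
        · have hc := Px.char_S34 hh hh34
          by_cases hk : contract h < ℵ₀
          · exact AllCD h hc.1 hc.2 hk
          · exact AllK h (not_lt.1 hk)
      · -- M = S4 ∩ S5
        have hch := Px.char_S45 hf4 hfM
        have hCDavail : ∀ u : Function.End Ω, ℵ₀ ≤ collapse u → defect u < ℵ₀ →
            contract u < ℵ₀ → u ∈ T := fun u h1 _ h3 => hMT.1 ⟨Or.inl h1, h3⟩
        have AllK := Px.claimKinf hTc hST hCDavail hfT hch
        intro h hh
        by_cases hk : contract h < ℵ₀
        · exact hMT.1 ⟨hh, hk⟩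
        · exact AllK h (not_lt.1 hk)
    exact hTS4.ne (Set.Subset.antisymm hTS4.1 hS4T)
end
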